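/- arXiv:math/0103031 — 3 statements merged into one kernel-verified Lean document; each statement's English description precedes it below -/
import Mathlib

section
/- Let m ≥ 2 and let w₁, …, wₙ be non-empty words in 𝒜_{k₁}, …, 𝒜_{kₙ} with k₁ ≠ k₂ ≠ … ≠ kₙ (k_i ∈ {1,2}). Then Ψ^{(m)} is multiplicative on such products modulo L^{(m−1)}: (Ψ^{(m)} ∘ j^{(m)})(w₁ ⋯ wₙ) = (Ψ^{(m)} ∘ j_{k₁}^{(m)})(w₁) ⋯ (Ψ^{(m)} ∘ j_{kₙ}^{(m)})(wₙ) (mod L^{(m−1)}). (Lemma 3.2) -/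
open scoped ComplexOrder TensorProduct

/-- `w` is a non-empty word in the generating set `G`. -/
def IsWord {R : Type*} [Monoid R] (G : Set R) (w : R) : Prop :=
  ∃ l : List R, l ≠ [] ∧ (∀ x ∈ l, x ∈ G) ∧ w = l.prod

/-- `φ` is a state on the unital complex *-algebra `R`. -/
def IsState {R : Type*} [Ring R] [Algebra ℂ R] [StarRing R] (φ : R →ₗ[ℂ] ℂ) : Prop :=
  φ 1 = 1 ∧ ∀ x, 0 ≤ φ (x * star x)

/-- The ordered product `f a * f (a+1) * ⋯ * f b` (an empty product if `b < a`). -/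
def ordProd {T : Type*} [Monoid T] (f : ℕ → T) (a b : ℕ) : T :=
  ((List.range' a (b + 1 - a)).map f).prod

/-- The element `t_{[k,m]}`: `g` at the tensor sites `k, …, m` (1-based), with the
convention `t_{[0,m]} = 0`. -/
def tBlock {T : Type*} [Ring T] (g : ℕ → T) (k m : ℕ) : T :=
  if k = 0 then 0 else ordProd g k m

/-- The embedding at tensor site `k` among the sites `1, …, m`, with value `0` out of
range (the convention `i_{m+1,m}(a) = 0`). -/
def embSite {T R : Type*} [Ring T] (e : ℕ → R → T) (m k : ℕ) (x : R) : T :=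
  if 1 ≤ k ∧ k ≤ m then e k x else 0

/-- `φt` is the Boolean extension of the state `φ` to the free product `S = R * ℂ[t]`
(with canonical embedding `ι : R → S` and separator `t`):  one has `φt 1 = 1` and
`φt (t^{e₀} w₁ t^{e₁} ⋯ wₙ t^{eₙ}) = φ(w₁) ⋯ φ(wₙ)` for all non-empty words `wᵢ` in the
generating set `G` and all exponents with `e₁, …, e_{n-1} > 0`. -/
def IsBooleanExt {R S : Type*} [Ring R] [Algebra ℂ R] [Ring S] [Algebra ℂ S]
    (G : Set R) (ι : R → S) (t : S) (φ : R →ₗ[ℂ] ℂ) (φt : S →ₗ[ℂ] ℂ) : Prop :=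
  φt 1 = 1 ∧
  ∀ (n : ℕ) (w : ℕ → R) (e : ℕ → ℕ),
    (∀ i < n, IsWord G (w i)) →
    (∀ i, 0 < i → i < n → 0 < e i) →
    φt (((List.range n).map fun i => t ^ e i * ι (w i)).prod * t ^ e n) =
      ((List.range n).map fun i => φ (w i)).prod

set_option linter.unusedSectionVars false

namespace BFaux

section Blk
variable {M : Type*} [Monoid M]

def blk (f : ℕ → M) (a n : ℕ) : M := ((List.range' a n).map f).prod

theorem ordProd_eq_blk (f : ℕ → M) (a b : ℕ) : ordProd f a b = blk f a (b + 1 - a) := rfl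

theorem ordProd_one_eq_blk (f : ℕ → M) (m : ℕ) : ordProd f 1 m = blk f 1 m := rfl

theorem blk_zero (f : ℕ → M) (a : ℕ) : blk f a 0 = 1 := rfl

theorem blk_succ (f : ℕ → M) (a n : ℕ) : blk f a (n + 1) = f a * blk f (a + 1) n := by
  simp [blk, List.range'_succ]

theorem blk_add (f : ℕ → M) (a n₁ n₂ : ℕ) :
    blk f a (n₁ + n₂) = blk f a n₁ * blk f (a + n₁) n₂ := by
  unfold blk
  rw [← List.prod_append, ← List.map_append]
  congr 1
  rw [← List.range'_append (s := a) (m := n₁) (n := n₂) (step := 1), one_mul]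

theorem blk_congr {f g : ℕ → M} {a n : ℕ} (h : ∀ j, a ≤ j → j < a + n → f j = g j) :
    blk f a n = blk g a n := by
  unfold blk
  congr 1
  apply List.map_congr_left
  intro x hx
  rw [List.mem_range'_1] at hx
  exact h x hx.1 hx.2

theorem blk_one {f : ℕ → M} {a n : ℕ} (h : ∀ j, a ≤ j → j < a + n → f j = 1) :
    blk f a n = 1 := by
  rw [blk_congr h]
  simp [blk]

theorem commute_blk {x : M} {f : ℕ → M} {a n : ℕ}
    (h : ∀ j, a ≤ j → j < a + n → Commute x (f j)) :
    Commute x (blk f a n) := by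
  apply Commute.list_prod_right
  intro y hy
  rw [List.mem_map] at hy
  obtain ⟨jj, hj, rfl⟩ := hy
  rw [List.mem_range'_1] at hj
  exact h jj hj.1 hj.2

theorem blk_mul_blk {f g h : ℕ → M} {a n : ℕ}
    (hc : ∀ j j', j ≠ j' → Commute (f j) (g j'))
    (hfg : ∀ j, f j * g j = h j) :
    blk f a n * blk g a n = blk h a n := by
  induction n generalizing a with
  | zero => simp [blk_zero]
  | succ n ih =>
    rw [blk_succ, blk_succ, blk_succ]
    have hcomm : Commute (blk f (a + 1) n) (g a) :=
      (commute_blk (x := g a) (fun j hj _ => (hc j a (by omega)).symm)).symm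
    rw [mul_assoc (f a), ← mul_assoc (blk f (a + 1) n), hcomm.eq,
      mul_assoc (g a), ← mul_assoc (f a), hfg, ih]

theorem blk_if_single {v : ℕ → M} {k m : ℕ} (hk1 : 1 ≤ k) (hkm : k ≤ m)
    (h1 : ∀ l, l ≠ k → v l = 1) :
    blk v 1 m = v k := by
  have hm : m = (k - 1) + (1 + (m - k)) := by omega
  rw [hm, blk_add, blk_add]
  rw [blk_one (f := v) (a := 1) (n := k - 1) (fun j hj hj' => h1 j (by omega))]
  have h2 : 1 + (k - 1) = k := by omega
  rw [h2]
  have h3 : blk v k 1 = v k := by simp [blk]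
  rw [h3, blk_one (fun j hj hj' => h1 j (by omega)), one_mul, mul_one]

theorem blk_tail_one {v : ℕ → M} {k m : ℕ} (hk1 : 1 ≤ k) (hkm : k ≤ m)
    (h1 : ∀ l, l < k → v l = 1) :
    blk v 1 m = blk v k (m + 1 - k) := by
  have hm : m = (k - 1) + (m + 1 - k) := by omega
  rw [hm, blk_add, blk_one (fun j hj hj' => h1 j (by omega)), one_mul]
  have h2 : 1 + (k - 1) = k := by omega
  rw [h2]
  congr 1
  omega

end Blk

/-! ### Words -/

theorem isWord_single {R : Type*} [Monoid R] {G : Set R} {a : R} (ha : a ∈ G) :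
    IsWord G a := ⟨[a], by simp, by simpa, by simp⟩

theorem isWord_mul {R : Type*} [Monoid R] {G : Set R} {u v : R}
    (hu : IsWord G u) (hv : IsWord G v) : IsWord G (u * v) := by
  obtain ⟨lu, hu1, hu2, rfl⟩ := hu
  obtain ⟨lv, hv1, hv2, rfl⟩ := hv
  refine ⟨lu ++ lv, ?_, ?_, ?_⟩
  · cases lu <;> simp_all
  · intro x hx
    rcases List.mem_append.mp hx with h | h
    · exact hu2 x h
    · exact hv2 x h
  · rw [List.prod_append]

theorem wordOr_mul {R : Type*} [Monoid R] {G : Set R} {u v : R}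
    (hu : u = 1 ∨ IsWord G u) (hv : v = 1 ∨ IsWord G v) :
    u * v = 1 ∨ IsWord G (u * v) := by
  rcases hu with rfl | hu
  · simpa using hv
  · rcases hv with rfl | hv
    · simpa using Or.inr hu
    · exact Or.inr (isWord_mul hu hv)

/-! ### Rep: normal-form representations -/

section Rep
variable {R S : Type*} [Monoid R] [Monoid S]

def Rep (G : Set R) (ι : R → S) (tb : S) (φ : R → ℂ) (strong : Bool) (z : S) (s : ℂ) : Prop :=
  ∃ (n : ℕ) (w : ℕ → R) (e : ℕ → ℕ),
    (∀ i < n, IsWord G (w i)) ∧ (∀ i, 0 < i → i < n → 0 < e i) ∧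
    (strong = true → 0 < e n ∨ n = 0) ∧
    z = ((List.range n).map fun i => tb ^ e i * ι (w i)).prod * tb ^ e n ∧
    s = ((List.range n).map fun i => φ (w i)).prod

variable {G : Set R} {ι : R → S} {tb : S} {φ : R → ℂ}

theorem rep_one : Rep G ι tb φ true 1 1 := by
  refine ⟨0, fun _ => 1, fun _ => 0, ?_, ?_, ?_, ?_, ?_⟩ <;> simp

theorem rep_weaken {b z s} (h : Rep G ι tb φ b z s) : Rep G ι tb φ false z s := by
  obtain ⟨n, w, e, h1, h2, _, h4, h5⟩ := h
  exact ⟨n, w, e, h1, h2, by simp, h4, h5⟩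

theorem rep_mul_t {b z s} (h : Rep G ι tb φ b z s) (r : ℕ) (hr : 0 < r ∨ b = true) :
    Rep G ι tb φ true (z * tb ^ r) s := by
  obtain ⟨n, w, e, h1, h2, h3, h4, h5⟩ := h
  refine ⟨n, w, fun i => if i = n then e n + r else e i, h1, ?_, ?_, ?_, ?_⟩
  · intro i hi hi'
    have hne : i ≠ n := by omega
    simpa [hne] using h2 i hi hi'
  · intro _
    rcases hr with hr | hb
    · left; simp; omega
    · rcases h3 hb with h6 | h6
      · left; simp; omega
      · right; exact h6
  · rw [h4, mul_assoc, ← pow_add]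
    congr 1
    · congr 1
      apply List.map_congr_left
      intro i hi
      rw [List.mem_range] at hi
      have hne : i ≠ n := by omega
      simp [hne]
    · simp
  · exact h5

theorem rep_mul_word {z s u} (h : Rep G ι tb φ true z s) (hu : IsWord G u) :
    Rep G ι tb φ false (z * ι u) (s * φ u) := by
  obtain ⟨n, w, e, h1, h2, h3, h4, h5⟩ := h
  refine ⟨n + 1, fun i => if i = n then u else w i,
      fun i => if i = n + 1 then 0 else e i, ?_, ?_, by simp, ?_, ?_⟩
  · intro i hi
    by_cases hin : i = n
    · simpa [hin] using hu
    · have : i < n := by omega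
      simpa [hin] using h1 i this
  · intro i hi hi'
    have hne : i ≠ n + 1 := by omega
    by_cases hin : i = n
    · subst hin
      rcases h3 rfl with h6 | h6
      · simpa [hne] using h6
      · omega
    · have : i < n := by omega
      simpa [hne] using h2 i hi this
  · rw [h4, List.range_succ, List.map_append, List.prod_append]
    simp only [List.map_cons, List.map_nil, List.prod_cons, List.prod_nil, mul_one]
    have hgoal : ((List.range n).map fun i =>
        tb ^ (if i = n + 1 then 0 else e i) * ι (if i = n then u else w i)).prod
        = ((List.range n).map fun i => tb ^ e i * ι (w i)).prod := by
      congr 1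
      apply List.map_congr_left
      intro i hi
      rw [List.mem_range] at hi
      have hne1 : i ≠ n + 1 := by omega
      have hne2 : i ≠ n := by omega
      simp [hne1, hne2]
    rw [hgoal]
    simp [mul_assoc]
  · rw [h5, List.range_succ, List.map_append, List.prod_append]
    have hgoal : ((List.range n).map fun i => φ (if i = n then u else w i)).prod
        = ((List.range n).map fun i => φ (w i)).prod := by
      congr 1
      apply List.map_congr_left
      intro i hi
      rw [List.mem_range] at hi
      have hne2 : i ≠ n := by omega
      simp [hne2]
    rw [hgoal]
    simp

theorem rep_mul_wordOr {z s u} (h : Rep G ι tb φ true z s)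
    (hι1 : ι 1 = 1) (hφ1 : φ 1 = 1) (hu : u = 1 ∨ IsWord G u) :
    Rep G ι tb φ false (z * ι u) (s * φ u) := by
  rcases hu with rfl | hu
  · rw [hι1, hφ1, mul_one, mul_one]
    exact rep_weaken h
  · exact rep_mul_word h hu

theorem rep_tpow (r : ℕ) : Rep G ι tb φ true (tb ^ r) 1 := by
  have := rep_mul_t (G := G) (ι := ι) (tb := tb) (φ := φ) rep_one r (Or.inr rfl)
  simpa using this

theorem rep_iota {u} (hι1 : ι 1 = 1) (hφ1 : φ 1 = 1) (hu : u = 1 ∨ IsWord G u) :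
    Rep G ι tb φ false (ι u) (φ u) := by
  have := rep_mul_wordOr (G := G) (tb := tb) rep_one hι1 hφ1 hu
  simpa using this

end Rep

theorem rep_eval {R S : Type*} [Ring R] [Algebra ℂ R] [Ring S] [Algebra ℂ S]
    {G : Set R} {ι : R → S} {tb : S} {φ : R →ₗ[ℂ] ℂ} {φt : S →ₗ[ℂ] ℂ}
    (hb : IsBooleanExt G ι tb φ φt) {flag : Bool} {z : S} {s : ℂ}
    (h : Rep G ι tb (⇑φ) flag z s) : φt z = s := by
  obtain ⟨n, w, e, h1, h2, _, h4, h5⟩ := h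
  rw [h4, h5]
  exact hb.2 n w e h1 h2

/-! ### The main context -/

section Main

variable {A B : Fin 2 → Type*} {T T' : Type*}
  [∀ i, Ring (A i)] [∀ i, Algebra ℂ (A i)] [∀ i, StarRing (A i)] [∀ i, StarModule ℂ (A i)]
  [∀ i, Ring (B i)] [∀ i, Algebra ℂ (B i)] [∀ i, StarRing (B i)] [∀ i, StarModule ℂ (B i)]
  [Ring T] [Algebra ℂ T] [StarRing T] [StarModule ℂ T]
  [Ring T'] [Algebra ℂ T'] [StarRing T'] [StarModule ℂ T']

/-- Merging two sums of normal-form products. -/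
theorem sum_blk_merge {TT : Type*} [Ring TT] [Algebra ℂ TT] [StarRing TT] [StarModule ℂ TT]
    (e : ∀ i, ℕ → B i →⋆ₐ[ℂ] TT)
    (hcomm : ∀ (i i' : Fin 2) (k k' : ℕ), (i, k) ≠ (i', k') →
      ∀ (x : B i) (y : B i'), Commute (e i k x) (e i' k' y))
    (m : ℕ) {ι1 ι2 : Type*} (F1 : Finset ι1) (F2 : Finset ι2)
    (c : ι1 → ℂ) (d : ι2 → ℂ) (x : ι1 → ℕ → B 0) (y : ι1 → ℕ → B 1)
    (x' : ι2 → ℕ → B 0) (y' : ι2 → ℕ → B 1) :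
    (∑ α ∈ F1, c α • (blk (fun l => (e 0 l) (x α l)) 1 m * blk (fun l => (e 1 l) (y α l)) 1 m)) *
      (∑ β ∈ F2, d β • (blk (fun l => (e 0 l) (x' β l)) 1 m * blk (fun l => (e 1 l) (y' β l)) 1 m)) =
    ∑ σ ∈ F1 ×ˢ F2, (c σ.1 * d σ.2) •
      (blk (fun l => (e 0 l) (x σ.1 l * x' σ.2 l)) 1 m *
        blk (fun l => (e 1 l) (y σ.1 l * y' σ.2 l)) 1 m) := by
  have h01 : ∀ (jj j' : ℕ), ((0 : Fin 2), jj) ≠ ((1 : Fin 2), j') := by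
    intro jj j' h
    have h2 := congrArg Prod.fst h
    simp at h2
  rw [Finset.sum_mul_sum, Finset.sum_product]
  apply Finset.sum_congr rfl
  intro α _
  apply Finset.sum_congr rfl
  intro β _
  rw [smul_mul_smul_comm]
  congr 1
  -- the two middle blocks commute
  have hyx : Commute (blk (fun l => (e 1 l) (y α l)) 1 m) (blk (fun l => (e 0 l) (x' β l)) 1 m) := by
    apply commute_blk
    intro jj _ _
    exact (commute_blk (x := (e 0 jj) (x' β jj))
      (fun j' _ _ => hcomm 0 1 jj j' (h01 jj j') _ _)).symm
  rw [mul_assoc, ← mul_assoc (blk (fun l => (e 1 l) (y α l)) 1 m), hyx.eq,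
    mul_assoc (blk (fun l => (e 0 l) (x' β l)) 1 m), ← mul_assoc,
    blk_mul_blk (fun j j' hne => hcomm 0 0 j j'
      (fun h => hne (congrArg Prod.snd h)) (x α j) (x' β j')) (fun j => (map_mul _ _ _).symm),
    blk_mul_blk (fun j j' hne => hcomm 1 1 j j'
      (fun h => hne (congrArg Prod.snd h)) (y α j) (y' β j')) (fun j => (map_mul _ _ _).symm)]

theorem wgen0
    (G : ∀ i, Set (A i)) (ι : ∀ i, A i →⋆ₐ[ℂ] B i) (t : ∀ i, B i) (m : ℕ)
    (e : ∀ i, ℕ → B i →⋆ₐ[ℂ] T)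
    (j : ∀ i, A i →⋆ₐ[ℂ] T)
    (hj1 : ∀ a ∈ G 0, j 0 a = ∑ k ∈ Finset.Icc 1 m,
      (embSite (fun l x => e 0 l x) m k (ι 0 a) - embSite (fun l x => e 0 l x) m (k + 1) (ι 0 a)) *
        tBlock (fun l => e 1 l (t 1)) k m)
    (a : A 0) (ha : a ∈ G 0) :
    ∃ (F1 : Finset (ℕ × Bool)) (c : ℕ × Bool → ℂ) (x : ℕ × Bool → ℕ → B 0)
      (y : ℕ × Bool → ℕ → B 1) (u : ℕ × Bool → A 0),
      j 0 a = ∑ β ∈ F1, c β •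
        (blk (fun l => (e 0 l) (x β l)) 1 m * blk (fun l => (e 1 l) (y β l)) 1 m) ∧
      ∀ β ∈ F1, x β m = ι 0 (u β) ∧ (u β = 1 ∨ IsWord (G 0) (u β)) ∧ y β m = t 1 ^ 1 := by
  classical
  refine ⟨Finset.Icc 1 m ×ˢ Finset.univ,
    (fun β => bif β.2 then (if β.1 = m then 0 else -1) else 1),
    (fun β l => if l = β.1 + (bif β.2 then 1 else 0) then ι 0 a else 1),
    (fun β l => if β.1 ≤ l then t 1 else 1),
    (fun β => if m = β.1 + (bif β.2 then 1 else 0) then a else 1), ?_, ?_⟩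
  · rw [hj1 a ha, Finset.sum_product]
    apply Finset.sum_congr rfl
    intro k hk
    rw [Finset.mem_Icc] at hk
    rw [Fintype.sum_bool]
    simp only [cond_true, cond_false, Nat.add_zero]
    have hyblk : blk (fun l => (e 1 l) (if k ≤ l then t 1 else 1)) 1 m
        = tBlock (fun l => (e 1 l) (t 1)) k m := by
      rw [blk_tail_one hk.1 hk.2 (fun l hl => by rw [if_neg (by omega), map_one])]
      rw [tBlock, if_neg (by omega), ordProd_eq_blk]
      exact blk_congr (fun jj hj hj' => by rw [if_pos hj])
    have hxblk : ∀ k', 1 ≤ k' → k' ≤ m →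
        blk (fun l => (e 0 l) (if l = k' then ι 0 a else 1)) 1 m = e 0 k' (ι 0 a) := by
      intro k' h1 h2
      have hh := blk_if_single (v := fun l => (e 0 l) (if l = k' then ι 0 a else 1)) h1 h2
        (fun l hl => by show (e 0 l) (if l = k' then (ι 0) a else 1) = 1; rw [if_neg hl, map_one])
      rw [hh]
      rw [if_pos rfl]
    have hemb1 : embSite (fun l x => (e 0 l) x) m k (ι 0 a) = e 0 k (ι 0 a) := by
      rw [embSite, if_pos ⟨hk.1, hk.2⟩]
    by_cases hkm : k = m
    · have hemb2 : embSite (fun l x => (e 0 l) x) m (k + 1) (ι 0 a) = 0 := by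
        rw [embSite, if_neg (by omega)]
      rw [hemb1, hemb2, sub_zero, if_pos hkm, zero_smul, one_smul, zero_add, hxblk k hk.1 hk.2,
        hyblk]
    · have hemb2 : embSite (fun l x => (e 0 l) x) m (k + 1) (ι 0 a) = e 0 (k + 1) (ι 0 a) := by
        rw [embSite, if_pos ⟨by omega, by omega⟩]
      rw [hemb1, hemb2, if_neg hkm, hxblk k hk.1 hk.2, hxblk (k + 1) (by omega) (by omega),
        hyblk, neg_smul, one_smul, one_smul, sub_mul, neg_add_eq_sub]
  · rintro ⟨k, b⟩ hmem
    rw [Finset.mem_product, Finset.mem_Icc] at hmem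
    dsimp only
    refine ⟨?_, ?_, ?_⟩
    · by_cases hs : m = k + (bif b then 1 else 0)
      · rw [if_pos hs, if_pos hs]
      · rw [if_neg hs, if_neg hs, map_one]
    · by_cases hs : m = k + (bif b then 1 else 0)
      · rw [if_pos hs]
        exact Or.inr (isWord_single ha)
      · rw [if_neg hs]
        exact Or.inl rfl
    · rw [if_pos hmem.1.2, pow_one]

theorem wgen1
    (G : ∀ i, Set (A i)) (ι : ∀ i, A i →⋆ₐ[ℂ] B i) (t : ∀ i, B i) (m : ℕ)
    (e : ∀ i, ℕ → B i →⋆ₐ[ℂ] T)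
    (j : ∀ i, A i →⋆ₐ[ℂ] T)
    (hj2 : ∀ b ∈ G 1, j 1 b = ∑ k ∈ Finset.Icc 1 m,
      tBlock (fun l => e 0 l (t 0)) k m *
        (embSite (fun l x => e 1 l x) m k (ι 1 b) - embSite (fun l x => e 1 l x) m (k + 1) (ι 1 b)))
    (a : A 1) (ha : a ∈ G 1) :
    ∃ (F1 : Finset (ℕ × Bool)) (c : ℕ × Bool → ℂ) (x : ℕ × Bool → ℕ → B 0)
      (y : ℕ × Bool → ℕ → B 1) (u : ℕ × Bool → A 1),
      j 1 a = ∑ β ∈ F1, c β •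
        (blk (fun l => (e 0 l) (x β l)) 1 m * blk (fun l => (e 1 l) (y β l)) 1 m) ∧
      ∀ β ∈ F1, y β m = ι 1 (u β) ∧ (u β = 1 ∨ IsWord (G 1) (u β)) ∧ x β m = t 0 ^ 1 := by
  classical
  refine ⟨Finset.Icc 1 m ×ˢ Finset.univ,
    (fun β => bif β.2 then (if β.1 = m then 0 else -1) else 1),
    (fun β l => if β.1 ≤ l then t 0 else 1),
    (fun β l => if l = β.1 + (bif β.2 then 1 else 0) then ι 1 a else 1),
    (fun β => if m = β.1 + (bif β.2 then 1 else 0) then a else 1), ?_, ?_⟩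
  · rw [hj2 a ha, Finset.sum_product]
    apply Finset.sum_congr rfl
    intro k hk
    rw [Finset.mem_Icc] at hk
    rw [Fintype.sum_bool]
    simp only [cond_true, cond_false, Nat.add_zero]
    have hyblk : blk (fun l => (e 0 l) (if k ≤ l then t 0 else 1)) 1 m
        = tBlock (fun l => (e 0 l) (t 0)) k m := by
      rw [blk_tail_one hk.1 hk.2 (fun l hl => by rw [if_neg (by omega), map_one])]
      rw [tBlock, if_neg (by omega), ordProd_eq_blk]
      exact blk_congr (fun jj hj hj' => by rw [if_pos hj])
    have hxblk : ∀ k', 1 ≤ k' → k' ≤ m →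
        blk (fun l => (e 1 l) (if l = k' then ι 1 a else 1)) 1 m = e 1 k' (ι 1 a) := by
      intro k' h1 h2
      have hh := blk_if_single (v := fun l => (e 1 l) (if l = k' then ι 1 a else 1)) h1 h2
        (fun l hl => by show (e 1 l) (if l = k' then (ι 1) a else 1) = 1; rw [if_neg hl, map_one])
      rw [hh]
      rw [if_pos rfl]
    have hemb1 : embSite (fun l x => (e 1 l) x) m k (ι 1 a) = e 1 k (ι 1 a) := by
      rw [embSite, if_pos ⟨hk.1, hk.2⟩]
    by_cases hkm : k = m
    · have hemb2 : embSite (fun l x => (e 1 l) x) m (k + 1) (ι 1 a) = 0 := by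
        rw [embSite, if_neg (by omega)]
      rw [hemb1, hemb2, sub_zero, if_pos hkm, zero_smul, one_smul, zero_add, hxblk k hk.1 hk.2,
        hyblk]
    · have hemb2 : embSite (fun l x => (e 1 l) x) m (k + 1) (ι 1 a) = e 1 (k + 1) (ι 1 a) := by
        rw [embSite, if_pos ⟨by omega, by omega⟩]
      rw [hemb1, hemb2, if_neg hkm, hxblk k hk.1 hk.2, hxblk (k + 1) (by omega) (by omega),
        hyblk, neg_smul, one_smul, one_smul, mul_sub, neg_add_eq_sub]
  · rintro ⟨k, b⟩ hmem
    rw [Finset.mem_product, Finset.mem_Icc] at hmem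
    dsimp only
    refine ⟨?_, ?_, ?_⟩
    · by_cases hs : m = k + (bif b then 1 else 0)
      · rw [if_pos hs, if_pos hs]
      · rw [if_neg hs, if_neg hs, map_one]
    · by_cases hs : m = k + (bif b then 1 else 0)
      · rw [if_pos hs]
        exact Or.inr (isWord_single ha)
      · rw [if_neg hs]
        exact Or.inl rfl
    · rw [if_pos hmem.1.2, pow_one]


theorem wexp
    (G : ∀ i, Set (A i)) (ι : ∀ i, A i →⋆ₐ[ℂ] B i) (t : ∀ i, B i) (m : ℕ)
    (e : ∀ i, ℕ → B i →⋆ₐ[ℂ] T)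
    (hcomm : ∀ (i i' : Fin 2) (k k' : ℕ), (i, k) ≠ (i', k') →
      ∀ (x : B i) (y : B i'), Commute (e i k x) (e i' k' y))
    (j : ∀ i, A i →⋆ₐ[ℂ] T)
    (hj1 : ∀ a ∈ G 0, j 0 a = ∑ k ∈ Finset.Icc 1 m,
      (embSite (fun l x => e 0 l x) m k (ι 0 a) - embSite (fun l x => e 0 l x) m (k + 1) (ι 0 a)) *
        tBlock (fun l => e 1 l (t 1)) k m)
    (hj2 : ∀ b ∈ G 1, j 1 b = ∑ k ∈ Finset.Icc 1 m,
      tBlock (fun l => e 0 l (t 0)) k m *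
        (embSite (fun l x => e 1 l x) m k (ι 1 b) - embSite (fun l x => e 1 l x) m (k + 1) (ι 1 b)))
    (i : Fin 2) (l : List (A i)) (hl : ∀ a ∈ l, a ∈ G i) :
    ∃ (ιT : Type) (F1 : Finset ιT) (c : ιT → ℂ) (x : ιT → ℕ → B 0) (y : ιT → ℕ → B 1),
      j i l.prod = ∑ β ∈ F1, c β •
        (blk (fun kk => (e 0 kk) (x β kk)) 1 m * blk (fun kk => (e 1 kk) (y β kk)) 1 m) ∧
      (i = 0 → ∃ u : ιT → A 0, ∀ β ∈ F1,
        x β m = ι 0 (u β) ∧ (u β = 1 ∨ IsWord (G 0) (u β)) ∧ y β m = t 1 ^ l.length) ∧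
      (i = 1 → ∃ u : ιT → A 1, ∀ β ∈ F1,
        y β m = ι 1 (u β) ∧ (u β = 1 ∨ IsWord (G 1) (u β)) ∧ x β m = t 0 ^ l.length) := by
  have hi : i = 0 ∨ i = 1 := by omega
  rcases hi with rfl | rfl
  · -- side 0
    revert hl
    induction l with
    | nil =>
      intro _
      have hb0 : blk (fun kk => (e 0 kk) ((1 : B 0))) 1 m = 1 :=
        blk_one (fun jj _ _ => map_one _)
      have hb1 : blk (fun kk => (e 1 kk) ((1 : B 1))) 1 m = 1 :=
        blk_one (fun jj _ _ => map_one _)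
      refine ⟨PUnit, Finset.univ, fun _ => 1, fun _ _ => 1, fun _ _ => 1, ?_, ?_, ?_⟩
      · rw [List.prod_nil, map_one]
        have hsum : (∑ _β ∈ (Finset.univ : Finset PUnit), (1:ℂ) •
            (blk (fun kk => (e 0 kk) ((1:B 0))) 1 m * blk (fun kk => (e 1 kk) ((1:B 1))) 1 m)) = 1 := by
          rw [hb0, hb1, one_mul, one_smul]
          simp
        exact hsum.symm
      · intro _
        exact ⟨fun _ => 1, fun β _ => ⟨(map_one (ι 0)).symm, Or.inl rfl, by simp⟩⟩
      · intro h
        exact absurd h (by decide)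
    | cons a l ih =>
      intro hl
      obtain ⟨ιT2, F2, c2, x2, y2, IHeq, IHc0, _⟩ :=
        ih (fun b hb => hl b (List.mem_cons_of_mem a hb))
      obtain ⟨u2, hu2⟩ := IHc0 rfl
      obtain ⟨F1, c1, x1, y1, u1, geq, gcl⟩ :=
        wgen0 G ι t m e j hj1 a (hl a List.mem_cons_self)
      refine ⟨(ℕ × Bool) × ιT2, F1 ×ˢ F2, fun σ => c1 σ.1 * c2 σ.2,
        fun σ kk => x1 σ.1 kk * x2 σ.2 kk, fun σ kk => y1 σ.1 kk * y2 σ.2 kk, ?_, ?_, ?_⟩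
      · rw [List.prod_cons, map_mul, geq, IHeq, sum_blk_merge e hcomm m]
      · intro _
        refine ⟨fun σ => u1 σ.1 * u2 σ.2, ?_⟩
        rintro ⟨β1, β2⟩ hσ
        rw [Finset.mem_product] at hσ
        obtain ⟨hx1, hw1, hy1⟩ := gcl β1 hσ.1
        obtain ⟨hx2, hw2, hy2⟩ := hu2 β2 hσ.2
        refine ⟨?_, wordOr_mul hw1 hw2, ?_⟩
        · show x1 β1 m * x2 β2 m = ι 0 (u1 β1 * u2 β2)
          rw [hx1, hx2, map_mul]
        · show y1 β1 m * y2 β2 m = t 1 ^ (a :: l).length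
          rw [hy1, hy2, ← pow_add, List.length_cons, Nat.add_comm]
      · intro h
        exact absurd h (by decide)
  · -- side 1
    revert hl
    induction l with
    | nil =>
      intro _
      have hb0 : blk (fun kk => (e 0 kk) ((1 : B 0))) 1 m = 1 :=
        blk_one (fun jj _ _ => map_one _)
      have hb1 : blk (fun kk => (e 1 kk) ((1 : B 1))) 1 m = 1 :=
        blk_one (fun jj _ _ => map_one _)
      refine ⟨PUnit, Finset.univ, fun _ => 1, fun _ _ => 1, fun _ _ => 1, ?_, ?_, ?_⟩
      · rw [List.prod_nil, map_one]
        have hsum : (∑ _β ∈ (Finset.univ : Finset PUnit), (1:ℂ) •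
            (blk (fun kk => (e 0 kk) ((1:B 0))) 1 m * blk (fun kk => (e 1 kk) ((1:B 1))) 1 m)) = 1 := by
          rw [hb0, hb1, one_mul, one_smul]
          simp
        exact hsum.symm
      · intro h
        exact absurd h (by decide)
      · intro _
        exact ⟨fun _ => 1, fun β _ => ⟨(map_one (ι 1)).symm, Or.inl rfl, by simp⟩⟩
    | cons a l ih =>
      intro hl
      obtain ⟨ιT2, F2, c2, x2, y2, IHeq, _, IHc1⟩ :=
        ih (fun b hb => hl b (List.mem_cons_of_mem a hb))
      obtain ⟨u2, hu2⟩ := IHc1 rfl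
      obtain ⟨F1, c1, x1, y1, u1, geq, gcl⟩ :=
        wgen1 G ι t m e j hj2 a (hl a List.mem_cons_self)
      refine ⟨(ℕ × Bool) × ιT2, F1 ×ˢ F2, fun σ => c1 σ.1 * c2 σ.2,
        fun σ kk => x1 σ.1 kk * x2 σ.2 kk, fun σ kk => y1 σ.1 kk * y2 σ.2 kk, ?_, ?_, ?_⟩
      · rw [List.prod_cons, map_mul, geq, IHeq, sum_blk_merge e hcomm m]
      · intro h
        exact absurd h (by decide)
      · intro _
        refine ⟨fun σ => u1 σ.1 * u2 σ.2, ?_⟩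
        rintro ⟨β1, β2⟩ hσ
        rw [Finset.mem_product] at hσ
        obtain ⟨hy1, hw1, hx1⟩ := gcl β1 hσ.1
        obtain ⟨hy2, hw2, hx2⟩ := hu2 β2 hσ.2
        refine ⟨?_, wordOr_mul hw1 hw2, ?_⟩
        · show y1 β1 m * y2 β2 m = ι 1 (u1 β1 * u2 β2)
          rw [hy1, hy2, map_mul]
        · show x1 β1 m * x2 β2 m = t 0 ^ (a :: l).length
          rw [hx1, hx2, ← pow_add, List.length_cons, Nat.add_comm]


theorem main_expand
    (G : ∀ i, Set (A i)) (ι : ∀ i, A i →⋆ₐ[ℂ] B i) (t : ∀ i, B i) (m : ℕ)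
    (e : ∀ i, ℕ → B i →⋆ₐ[ℂ] T)
    (hcomm : ∀ (i i' : Fin 2) (k k' : ℕ), (i, k) ≠ (i', k') →
      ∀ (x : B i) (y : B i'), Commute (e i k x) (e i' k' y))
    (f : ∀ i, ℕ → B i →⋆ₐ[ℂ] T')
    (hcomm' : ∀ (i i' : Fin 2) (k k' : ℕ), (i, k) ≠ (i', k') →
      ∀ (x : B i) (y : B i'), Commute (f i k x) (f i' k' y))
    (ψ : ∀ i, A i →ₗ[ℂ] ℂ) (hψ : ∀ i, IsState (ψ i))
    (ψt : ∀ i, B i →ₗ[ℂ] ℂ)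
    (hψt : ∀ i, IsBooleanExt (G i) (⇑(ι i)) (t i) (ψ i) (ψt i))
    (Ψ : T →ₗ[ℂ] T')
    (hΨ : ∀ (x : ℕ → B 0) (y : ℕ → B 1),
      Ψ (ordProd (fun k => e 0 k (x k)) 1 m * ordProd (fun k => e 1 k (y k)) 1 m) =
        (ψt 0 (x m) * ψt 1 (y m)) •
          (ordProd (fun k => f 0 k (x k)) 1 (m - 1) * ordProd (fun k => f 1 k (y k)) 1 (m - 1)))
    (j : ∀ i, A i →⋆ₐ[ℂ] T)
    (hj1 : ∀ a ∈ G 0, j 0 a = ∑ k ∈ Finset.Icc 1 m,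
      (embSite (fun l x => e 0 l x) m k (ι 0 a) - embSite (fun l x => e 0 l x) m (k + 1) (ι 0 a)) *
        tBlock (fun l => e 1 l (t 1)) k m)
    (hj2 : ∀ b ∈ G 1, j 1 b = ∑ k ∈ Finset.Icc 1 m,
      tBlock (fun l => e 0 l (t 0)) k m *
        (embSite (fun l x => e 1 l x) m k (ι 1 b) - embSite (fun l x => e 1 l x) m (k + 1) (ι 1 b)))
    (n : ℕ) (k : ℕ → Fin 2) (w : ∀ i, A (k i))
    (hk : ∀ i, i + 1 < n → k i ≠ k (i + 1))
    (hw : ∀ i < n, IsWord (G (k i)) (w i)) :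
    ∀ p, p ≤ n →
    ∃ (ιT : Type) (F : Finset ιT) (c s0 s1 : ιT → ℂ) (X : ιT → ℕ → B 0) (Y : ιT → ℕ → B 1)
      (b0 b1 : Bool),
      (p = 0 → b0 = true ∧ b1 = true) ∧
      (0 < p → k (p - 1) = 1 → b0 = true) ∧
      (0 < p → k (p - 1) = 0 → b1 = true) ∧
      ((List.range p).map fun i => j (k i) (w i)).prod
        = ∑ α ∈ F, c α • (blk (fun l => (e 0 l) (X α l)) 1 m * blk (fun l => (e 1 l) (Y α l)) 1 m) ∧
      ((List.range p).map fun i => Ψ (j (k i) (w i))).prod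
        = ∑ α ∈ F, (c α * (s0 α * s1 α)) •
            (blk (fun l => (f 0 l) (X α l)) 1 (m - 1) * blk (fun l => (f 1 l) (Y α l)) 1 (m - 1)) ∧
      ∀ α ∈ F, Rep (G 0) (⇑(ι 0)) (t 0) (⇑(ψ 0)) b0 (X α m) (s0 α) ∧
               Rep (G 1) (⇑(ι 1)) (t 1) (⇑(ψ 1)) b1 (Y α m) (s1 α) := by
  have hΨblk : ∀ (x : ℕ → B 0) (y : ℕ → B 1),
      Ψ (blk (fun kk => (e 0 kk) (x kk)) 1 m * blk (fun kk => (e 1 kk) (y kk)) 1 m) =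
        (ψt 0 (x m) * ψt 1 (y m)) •
          (blk (fun kk => (f 0 kk) (x kk)) 1 (m-1) * blk (fun kk => (f 1 kk) (y kk)) 1 (m-1)) := by
    intro x y
    have h := hΨ x y
    rwa [ordProd_one_eq_blk, ordProd_one_eq_blk, ordProd_one_eq_blk, ordProd_one_eq_blk] at h
  intro p
  induction p with
  | zero =>
    intro _
    have hb0 : blk (fun kk => (e 0 kk) ((1 : B 0))) 1 m = 1 := blk_one (fun jj _ _ => map_one _)
    have hb1 : blk (fun kk => (e 1 kk) ((1 : B 1))) 1 m = 1 := blk_one (fun jj _ _ => map_one _)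
    have hc0 : blk (fun kk => (f 0 kk) ((1 : B 0))) 1 (m-1) = 1 := blk_one (fun jj _ _ => map_one _)
    have hc1 : blk (fun kk => (f 1 kk) ((1 : B 1))) 1 (m-1) = 1 := blk_one (fun jj _ _ => map_one _)
    refine ⟨PUnit, Finset.univ, fun _ => 1, fun _ => 1, fun _ => 1, fun _ _ => 1, fun _ _ => 1,
      true, true, fun _ => ⟨rfl, rfl⟩, fun h _ => absurd h (by omega),
      fun h _ => absurd h (by omega), ?_, ?_, fun α _ => ⟨rep_one, rep_one⟩⟩
    · rw [List.range_zero, List.map_nil, List.prod_nil]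
      have hsum : (∑ _β ∈ (Finset.univ : Finset PUnit), (1:ℂ) •
          (blk (fun kk => (e 0 kk) ((1:B 0))) 1 m * blk (fun kk => (e 1 kk) ((1:B 1))) 1 m)) = 1 := by
        rw [hb0, hb1, one_mul, one_smul]
        simp
      exact hsum.symm
    · rw [List.range_zero, List.map_nil, List.prod_nil]
      have hsum : (∑ _β ∈ (Finset.univ : Finset PUnit), ((1:ℂ) * (1 * 1)) •
          (blk (fun kk => (f 0 kk) ((1:B 0))) 1 (m-1) * blk (fun kk => (f 1 kk) ((1:B 1))) 1 (m-1))) = 1 := by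
        rw [hc0, hc1]
        simp
      exact hsum.symm
  | succ p ih =>
    intro hc
    obtain ⟨ιT, F, c, s0, s1, X, Y, b0, b1, hf1, hf2, hf3, h1, h2, h3⟩ := ih (by omega)
    have hpn : p < n := by omega
    obtain ⟨lw, hl0, hlG, hlp⟩ := hw p hpn
    obtain ⟨ιT2, F2, c2, x2, y2, Weq, Wc0, Wc1⟩ := wexp G ι t m e hcomm j hj1 hj2 (k p) lw hlG
    have hkp : k p = 0 ∨ k p = 1 := by omega
    have hlen : 0 < lw.length := List.length_pos_iff.mpr hl0
    rcases hkp with hk0 | hk1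
    · -- side 0
      obtain ⟨u, hu⟩ := Wc0 hk0
      have hb0 : b0 = true := by
        rcases Nat.eq_zero_or_pos p with hp0 | hp0
        · exact (hf1 hp0).1
        · apply hf2 hp0
          have hne := hk (p - 1) (by omega)
          have hp1 : p - 1 + 1 = p := by omega
          rw [hp1] at hne
          omega
      have hΨw : Ψ (j (k p) (w p)) = ∑ β ∈ F2, (c2 β * ψ 0 (u β)) •
          (blk (fun l => (f 0 l) (x2 β l)) 1 (m-1) * blk (fun l => (f 1 l) (y2 β l)) 1 (m-1)) := by
        rw [hlp, Weq, map_sum]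
        apply Finset.sum_congr rfl
        intro β hβ
        obtain ⟨hx, hwOr, hy⟩ := hu β hβ
        rw [map_smul, hΨblk (x2 β) (y2 β), hx, hy,
          rep_eval (hψt 0) (rep_iota (map_one (ι 0)) (hψ 0).1 hwOr),
          rep_eval (hψt 1) (rep_tpow lw.length), mul_one, smul_smul]
      refine ⟨ιT × ιT2, F ×ˢ F2, fun σ => c σ.1 * c2 σ.2,
        fun σ => s0 σ.1 * ψ 0 (u σ.2), fun σ => s1 σ.1,
        fun σ l => X σ.1 l * x2 σ.2 l, fun σ l => Y σ.1 l * y2 σ.2 l,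
        false, true, ?_, ?_, fun _ _ => rfl, ?_, ?_, ?_⟩
      · intro hcontra
        exact absurd hcontra (by omega)
      · intro _ hkk
        exfalso
        have hkk' : k p = 1 := by simpa using hkk
        rw [hk0] at hkk'
        exact absurd hkk' (by decide)
      · rw [List.range_succ, List.map_append, List.prod_append]
        simp only [List.map_cons, List.map_nil, List.prod_cons, List.prod_nil, mul_one]
        rw [hlp, Weq, h1, sum_blk_merge e hcomm m F F2 c c2 X Y x2 y2]
      · rw [List.range_succ, List.map_append, List.prod_append]
        simp only [List.map_cons, List.map_nil, List.prod_cons, List.prod_nil, mul_one]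
        rw [hΨw, h2, sum_blk_merge f hcomm' (m-1) F F2 (fun α => c α * (s0 α * s1 α))
          (fun β => c2 β * ψ 0 (u β)) X Y x2 y2]
        apply Finset.sum_congr rfl
        intro σ _
        congr 1
        ring
      · rintro ⟨α, β⟩ hσ
        rw [Finset.mem_product] at hσ
        obtain ⟨hx, hwOr, hy⟩ := hu β hσ.2
        obtain ⟨hRX, hRY⟩ := h3 α hσ.1
        constructor
        · show Rep (G 0) (⇑(ι 0)) (t 0) (⇑(ψ 0)) false (X α m * x2 β m) (s0 α * ψ 0 (u β))
          rw [hx]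
          exact rep_mul_wordOr (hb0 ▸ hRX) (map_one (ι 0)) (hψ 0).1 hwOr
        · show Rep (G 1) (⇑(ι 1)) (t 1) (⇑(ψ 1)) true (Y α m * y2 β m) (s1 α)
          rw [hy]
          exact rep_mul_t hRY lw.length (Or.inl hlen)
    · -- side 1
      obtain ⟨u, hu⟩ := Wc1 hk1
      have hb1 : b1 = true := by
        rcases Nat.eq_zero_or_pos p with hp0 | hp0
        · exact (hf1 hp0).2
        · apply hf3 hp0
          have hne := hk (p - 1) (by omega)
          have hp1 : p - 1 + 1 = p := by omega
          rw [hp1] at hne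
          omega
      have hΨw : Ψ (j (k p) (w p)) = ∑ β ∈ F2, (c2 β * ψ 1 (u β)) •
          (blk (fun l => (f 0 l) (x2 β l)) 1 (m-1) * blk (fun l => (f 1 l) (y2 β l)) 1 (m-1)) := by
        rw [hlp, Weq, map_sum]
        apply Finset.sum_congr rfl
        intro β hβ
        obtain ⟨hy, hwOr, hx⟩ := hu β hβ
        rw [map_smul, hΨblk (x2 β) (y2 β), hx, hy,
          rep_eval (hψt 0) (rep_tpow lw.length),
          rep_eval (hψt 1) (rep_iota (map_one (ι 1)) (hψ 1).1 hwOr), one_mul, smul_smul]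
      refine ⟨ιT × ιT2, F ×ˢ F2, fun σ => c σ.1 * c2 σ.2,
        fun σ => s0 σ.1, fun σ => s1 σ.1 * ψ 1 (u σ.2),
        fun σ l => X σ.1 l * x2 σ.2 l, fun σ l => Y σ.1 l * y2 σ.2 l,
        true, false, ?_, fun _ _ => rfl, ?_, ?_, ?_, ?_⟩
      · intro hcontra
        exact absurd hcontra (by omega)
      · intro _ hkk
        exfalso
        have hkk' : k p = 0 := by simpa using hkk
        rw [hk1] at hkk'
        exact absurd hkk' (by decide)
      · rw [List.range_succ, List.map_append, List.prod_append]
        simp only [List.map_cons, List.map_nil, List.prod_cons, List.prod_nil, mul_one]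
        rw [hlp, Weq, h1, sum_blk_merge e hcomm m F F2 c c2 X Y x2 y2]
      · rw [List.range_succ, List.map_append, List.prod_append]
        simp only [List.map_cons, List.map_nil, List.prod_cons, List.prod_nil, mul_one]
        rw [hΨw, h2, sum_blk_merge f hcomm' (m-1) F F2 (fun α => c α * (s0 α * s1 α))
          (fun β => c2 β * ψ 1 (u β)) X Y x2 y2]
        apply Finset.sum_congr rfl
        intro σ _
        congr 1
        ring
      · rintro ⟨α, β⟩ hσ
        rw [Finset.mem_product] at hσ
        obtain ⟨hy, hwOr, hx⟩ := hu β hσ.2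
        obtain ⟨hRX, hRY⟩ := h3 α hσ.1
        constructor
        · show Rep (G 0) (⇑(ι 0)) (t 0) (⇑(ψ 0)) true (X α m * x2 β m) (s0 α)
          rw [hx]
          exact rep_mul_t hRX lw.length (Or.inl hlen)
        · show Rep (G 1) (⇑(ι 1)) (t 1) (⇑(ψ 1)) false (Y α m * y2 β m) (s1 α * ψ 1 (u β))
          rw [hy]
          exact rep_mul_wordOr (hb1 ▸ hRY) (map_one (ι 1)) (hψ 1).1 hwOr

end Main
end BFaux

/- `A i` is the unital free *-algebra `𝒜ᵢ₊₁` with generating set `G i`; `B i` is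
`𝒜̃ᵢ₊₁ = 𝒜ᵢ₊₁ * ℂ[t]` with embedding `ι i` and hermitian separator `t i`;
`T = 𝒜̃^{(m)}` and `T' = 𝒜̃^{(m-1)}` are the `m`- and `(m-1)`-level tensor products, with
commuting site embeddings `e i k` (`k = 1, …, m`) and `f i k` (`k = 1, …, m-1`);
`Ψ = Ψ^{(m)} = id^{⊗(m-1)} ⊗ ψ̃₁ ⊗ id^{⊗(m-1)} ⊗ ψ̃₂ : T → T'` is the condition map;
`j i`, `j' i` are the *-homomorphisms `jᵢ₊₁^{(m)}`, `jᵢ₊₁^{(m-1)}`; `L'` is the ideal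
`L^{(m-1)}`. -/
theorem condition_map_multiplicative_mod_ideal
    {A B : Fin 2 → Type*} {T T' : Type*}
    [∀ i, Ring (A i)] [∀ i, Algebra ℂ (A i)] [∀ i, StarRing (A i)] [∀ i, StarModule ℂ (A i)]
    [∀ i, Ring (B i)] [∀ i, Algebra ℂ (B i)] [∀ i, StarRing (B i)] [∀ i, StarModule ℂ (B i)]
    [Ring T] [Algebra ℂ T] [StarRing T] [StarModule ℂ T]
    [Ring T'] [Algebra ℂ T'] [StarRing T'] [StarModule ℂ T']
    (G : ∀ i, Set (A i)) (hG : ∀ i, ∀ x ∈ G i, star x ∈ G i)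
    (hA : ∀ i, Algebra.adjoin ℂ (G i) = ⊤)
    (ι : ∀ i, A i →⋆ₐ[ℂ] B i) (t : ∀ i, B i) (ht : ∀ i, star (t i) = t i)
    (hB : ∀ i, Algebra.adjoin ℂ (Set.range (ι i) ∪ {t i}) = ⊤)
    (m : ℕ) (hm : 2 ≤ m)
    (e : ∀ i, ℕ → B i →⋆ₐ[ℂ] T)
    (hcomm : ∀ (i i' : Fin 2) (k k' : ℕ), (i, k) ≠ (i', k') →
      ∀ (x : B i) (y : B i'), Commute (e i k x) (e i' k' y))
    (hT : Algebra.adjoin ℂ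
      {x : T | ∃ (i : Fin 2) (k : ℕ), 1 ≤ k ∧ k ≤ m ∧ ∃ b : B i, x = e i k b} = ⊤)
    (f : ∀ i, ℕ → B i →⋆ₐ[ℂ] T')
    (hcomm' : ∀ (i i' : Fin 2) (k k' : ℕ), (i, k) ≠ (i', k') →
      ∀ (x : B i) (y : B i'), Commute (f i k x) (f i' k' y))
    (hT' : Algebra.adjoin ℂ
      {x : T' | ∃ (i : Fin 2) (k : ℕ), 1 ≤ k ∧ k ≤ m - 1 ∧ ∃ b : B i, x = f i k b} = ⊤)
    -- the states `ψᵢ` and their Boolean extensions `ψt i`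
    (ψ : ∀ i, A i →ₗ[ℂ] ℂ) (hψ : ∀ i, IsState (ψ i))
    (ψt : ∀ i, B i →ₗ[ℂ] ℂ)
    (hψt : ∀ i, IsBooleanExt (G i) (⇑(ι i)) (t i) (ψ i) (ψt i))
    -- the condition map `Ψ^{(m)} = id^{⊗(m-1)} ⊗ ψ̃₁ ⊗ id^{⊗(m-1)} ⊗ ψ̃₂`
    (Ψ : T →ₗ[ℂ] T')
    (hΨ : ∀ (x : ℕ → B 0) (y : ℕ → B 1),
      Ψ (ordProd (fun k => e 0 k (x k)) 1 m * ordProd (fun k => e 1 k (y k)) 1 m) =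
        (ψt 0 (x m) * ψt 1 (y m)) •
          (ordProd (fun k => f 0 k (x k)) 1 (m - 1) * ordProd (fun k => f 1 k (y k)) 1 (m - 1)))
    -- the *-homomorphism `j^{(m)}`
    (j : ∀ i, A i →⋆ₐ[ℂ] T)
    (hj1 : ∀ a ∈ G 0, j 0 a = ∑ k ∈ Finset.Icc 1 m,
      (embSite (fun l x => e 0 l x) m k (ι 0 a) - embSite (fun l x => e 0 l x) m (k + 1) (ι 0 a)) *
        tBlock (fun l => e 1 l (t 1)) k m)
    (hj2 : ∀ b ∈ G 1, j 1 b = ∑ k ∈ Finset.Icc 1 m,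
      tBlock (fun l => e 0 l (t 0)) k m *
        (embSite (fun l x => e 1 l x) m k (ι 1 b) - embSite (fun l x => e 1 l x) m (k + 1) (ι 1 b)))
    -- the two-sided *-ideal `L^{(m-1)}`
    (L' : TwoSidedIdeal T')
    (hL' : L' = TwoSidedIdeal.span
      {x : T' | ∃ (i : Fin 2) (k : ℕ), 1 ≤ k ∧ k ≤ m - 1 ∧ x = f i k (t i * (1 - t i))})
    -- non-empty words `w i` in `𝒜_{k i}`, with consecutive indices distinct
    (n : ℕ) (k : ℕ → Fin 2) (w : ∀ i, A (k i))
    (hk : ∀ i, i + 1 < n → k i ≠ k (i + 1))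
    (hw : ∀ i < n, IsWord (G (k i)) (w i)) :
    -- `(Ψ^{(m)} ∘ j^{(m)})(w₁ ⋯ wₙ)
    --    = (Ψ^{(m)} ∘ j_{k₁}^{(m)})(w₁) ⋯ (Ψ^{(m)} ∘ j_{kₙ}^{(m)})(wₙ)  (mod L^{(m-1)})`
    Ψ (((List.range n).map fun i => j (k i) (w i)).prod) -
        ((List.range n).map fun i => Ψ (j (k i) (w i))).prod ∈ L' := by
  classical
  have key : Ψ (((List.range n).map fun i => j (k i) (w i)).prod)
      = ((List.range n).map fun i => Ψ (j (k i) (w i))).prod := by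
    obtain ⟨ιT, F, c, s0, s1, X, Y, b0, b1, _, _, _, h1, h2, h3⟩ :=
      BFaux.main_expand G ι t m e hcomm f hcomm' ψ hψ ψt hψt Ψ hΨ j hj1 hj2 n k w hk hw n le_rfl
    have hΨblk : ∀ (x : ℕ → B 0) (y : ℕ → B 1),
        Ψ (BFaux.blk (fun kk => (e 0 kk) (x kk)) 1 m * BFaux.blk (fun kk => (e 1 kk) (y kk)) 1 m) =
          (ψt 0 (x m) * ψt 1 (y m)) •
            (BFaux.blk (fun kk => (f 0 kk) (x kk)) 1 (m-1) *
              BFaux.blk (fun kk => (f 1 kk) (y kk)) 1 (m-1)) := by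
      intro x y
      have h := hΨ x y
      rwa [BFaux.ordProd_one_eq_blk, BFaux.ordProd_one_eq_blk, BFaux.ordProd_one_eq_blk,
        BFaux.ordProd_one_eq_blk] at h
    rw [h1, h2, map_sum]
    apply Finset.sum_congr rfl
    intro α hα
    rw [map_smul, hΨblk (X α) (Y α), BFaux.rep_eval (hψt 0) (h3 α hα).1,
      BFaux.rep_eval (hψt 1) (h3 α hα).2, smul_smul]
  rw [key, sub_self]
  exact L'.zero_mem
end

section
/- (Pyramidal formula.) Let s ∈ ℕ and let w₁, …, wₙ be non-empty words in 𝒜_{k₁}, …, 𝒜_{kₙ} with k₁ ≠ k₂ ≠ … ≠ kₙ (k_i ∈ {1,2}) and n ≤ s + 1. Then Φ̃^{(s)}(j_{k₁}^{(s)}(w₁) ⋯ j_{kₙ}^{(s)}(wₙ)) = Σ Φ̃^{(s)}(j_{k₁,m₁}^{(s)}(w₁) ⋯ j_{kₙ,mₙ}^{(s)}(wₙ)), where the sum runs over all indices with 1 ≤ m_i ≤ min(i, n + 1 − i) for each i (in particular m₁ = mₙ = 1). (Claim in the proof of Theorem 4.1) -/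
open scoped ComplexOrder TensorProduct

namespace PyrAux
lemma fin2 (x : Fin 2) : x = 0 ∨ x = 1 := by
  fin_cases x <;> simp

lemma reorder1 {M : Type*} [Monoid M] {A B E R : M} (h : Commute E B) :
    A * B * (E * R) = ((A * E) * B) * R := by
  rw [mul_assoc A B, ← mul_assoc B E R, ← h.eq, mul_assoc E B R, ← mul_assoc A E, ← mul_assoc]



lemma isWord_mul {R : Type*} [Monoid R] {G : Set R} {a b : R}
    (ha : IsWord G a) (hb : IsWord G b) : IsWord G (a * b) := by
  obtain ⟨l₁, h₁, hm₁, rfl⟩ := ha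
  obtain ⟨l₂, h₂, hm₂, rfl⟩ := hb
  refine ⟨l₁ ++ l₂, by simp [h₁], ?_, (List.prod_append).symm⟩
  intro x hx
  rcases List.mem_append.1 hx with h | h
  exacts [hm₁ x h, hm₂ x h]

section boolean
variable {R S : Type*} [Ring R] [Algebra ℂ R] [Ring S] [Algebra ℂ S]
variable (G : Set R) (ι : R → S) (t : S)

/-- A "letter": either `1`, the separator `t`, or the image of a non-empty word. -/
def IsLetter (x : S) : Prop := x = 1 ∨ x = t ∨ ∃ u, IsWord G u ∧ x = ι u

lemma prod_eq_pow {L : List S} (h : ∀ x ∈ L, x = 1 ∨ x = t) : ∃ a : ℕ, L.prod = t ^ a := by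
  induction L with
  | nil => exact ⟨0, by simp⟩
  | cons x L ih =>
      obtain ⟨a, ha⟩ := ih fun y hy => h y (List.mem_cons_of_mem _ hy)
      rcases h x List.mem_cons_self with rfl | rfl
      · exact ⟨a, by simp [ha]⟩
      · exact ⟨a + 1, by rw [List.prod_cons, ha, ← pow_succ']⟩

/-- Canonical Boolean form of a product of letters. -/
lemma rep_exists (hι : ∀ a b, ι (a * b) = ι a * ι b) :
    ∀ (L : List S), (∀ x ∈ L, IsLetter G ι t x) →
    ∃ (p : ℕ) (u : ℕ → R) (c : ℕ → ℕ),
      (∀ i, i < p → IsWord G (u i)) ∧ (∀ i, 0 < i → i < p → 0 < c i) ∧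
      L.prod = ((List.range p).map fun i => t ^ c i * ι (u i)).prod * t ^ c p := by
  intro L
  induction L using List.reverseRecOn with
  | nil =>
      intro _
      exact ⟨0, fun _ => 1, fun _ => 0, by omega, by omega, by simp⟩
  | append_singleton L x ih =>
      intro hL
      obtain ⟨p, u, c, hu, hc, hprod⟩ := ih fun y hy => hL y (by simp [hy])
      have hx := hL x (by simp)
      have hLx : (L ++ [x]).prod = L.prod * x := by simp
      rcases hx with rfl | rfl | ⟨u₀, hu₀, rfl⟩
      · exact ⟨p, u, c, hu, hc, by rw [hLx, hprod, mul_one]⟩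
      · -- append a `t`: increase the last exponent
        refine ⟨p, u, (fun i => if i = p then c p + 1 else c i), hu, ?_, ?_⟩
        · intro i h1 h2; simp only [if_neg (by omega : ¬ i = p)]; exact hc i h1 h2
        · rw [hLx, hprod, mul_assoc, ← pow_succ]
          simp only [if_pos rfl]
          congr 2
          apply List.map_congr_left
          intro i hi
          rw [List.mem_range] at hi
          rw [if_neg (by omega : ¬ i = p)]
      · by_cases hp : p = 0 ∨ 0 < c p
        · -- start a new group
          refine ⟨p + 1, (fun i => if i = p then u₀ else u i),
            (fun i => if i = p + 1 then 0 else c i), ?_, ?_, ?_⟩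
          · intro i hi
            by_cases h : i = p
            · simpa [h] using hu₀
            · simp only [if_neg h]; exact hu i (by omega)
          · intro i h1 h2
            simp only [if_neg (by omega : ¬ i = p + 1)]
            rcases Nat.lt_or_ge i p with h | h
            · exact hc i h1 h
            · have hip : i = p := by omega
              subst hip
              rcases hp with h0 | h0
              · omega
              · exact h0
          · rw [hLx, hprod]
            rw [List.range_succ, List.map_append, List.prod_append,
              List.map_singleton, List.prod_singleton]
            simp only [eq_self_iff_true, if_true, if_neg (by omega : ¬ p = p + 1),
              if_neg (by omega : ¬ p + 1 = p)]
            have hcongr : ∀ i ∈ List.range p,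
                t ^ (if i = p + 1 then 0 else c i) * ι (if i = p then u₀ else u i) =
                t ^ c i * ι (u i) := by
              intro i hi
              rw [List.mem_range] at hi
              rw [if_neg (by omega : ¬ i = p + 1), if_neg (by omega : ¬ i = p)]
            rw [List.map_congr_left hcongr, pow_zero, mul_one, mul_assoc]
        · -- merge with the previous group
          push_neg at hp
          obtain ⟨hp0, hcp⟩ := hp
          have hcp0 : c p = 0 := by omega
          have hp0' : 0 < p := Nat.pos_of_ne_zero hp0
          refine ⟨p, (fun i => if i = p - 1 then u (p - 1) * u₀ else u i), c, ?_, hc, ?_⟩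
          · intro i hi
            by_cases h : i = p - 1
            · subst h
              simpa using isWord_mul (hu (p - 1) (by omega)) hu₀
            · simp only [if_neg h]; exact hu i hi
          · rw [hLx, hprod, hcp0, pow_zero, mul_one, mul_one]
            have hsplit : List.range p = List.range (p - 1) ++ [p - 1] := by
              conv_lhs => rw [show p = (p - 1) + 1 by omega]
              exact List.range_succ
            rw [hsplit, List.map_append, List.prod_append, List.map_append, List.prod_append,
              List.map_singleton, List.prod_singleton, List.map_singleton, List.prod_singleton]
            simp only [eq_self_iff_true, if_true]
            have hcongr : ∀ i ∈ List.range (p - 1),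
                t ^ c i * ι (if i = p - 1 then u (p - 1) * u₀ else u i) =
                t ^ c i * ι (u i) := by
              intro i hi
              rw [List.mem_range] at hi
              rw [if_neg (by omega : ¬ i = p - 1)]
            rw [List.map_congr_left hcongr, hι]
            simp [mul_assoc]

variable {φ : R →ₗ[ℂ] ℂ} {φt : S →ₗ[ℂ] ℂ}

lemma BE_left (hι : ∀ a b, ι (a * b) = ι a * ι b) (hBE : IsBooleanExt G ι t φ φt)
    {L : List S} (hL : ∀ x ∈ L, IsLetter G ι t x) (a : ℕ) :
    φt (t ^ a * L.prod) = φt L.prod := by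
  obtain ⟨p, u, c, hu, hc, hprod⟩ := rep_exists G ι t hι L hL
  rcases Nat.eq_zero_or_pos p with rfl | hp
  · rw [hprod]
    simp only [List.range_zero, List.map_nil, List.prod_nil, one_mul]
    have h0 := hBE.2 0 u (fun _ => a + c 0) (by omega) (by omega)
    have h0' := hBE.2 0 u c (by omega) (by omega)
    simp only [List.range_zero, List.map_nil, List.prod_nil, one_mul] at h0 h0'
    rw [← pow_add, h0, h0']
  · set c' : ℕ → ℕ := fun i => if i = 0 then a + c 0 else c i with hc'def
    have hkey : t ^ a * (((List.range p).map fun i => t ^ c i * ι (u i)).prod * t ^ c p) =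
        ((List.range p).map fun i => t ^ c' i * ι (u i)).prod * t ^ c' p := by
      obtain ⟨q, rfl⟩ : ∃ q, p = q + 1 := ⟨p - 1, by omega⟩
      rw [List.range_succ_eq_map, List.map_cons, List.prod_cons, List.map_cons, List.prod_cons,
        List.map_map, List.map_map]
      have htail : (List.range q).map ((fun i => t ^ c' i * ι (u i)) ∘ Nat.succ) =
          (List.range q).map ((fun i => t ^ c i * ι (u i)) ∘ Nat.succ) := by
        apply List.map_congr_left
        intro i _
        simp only [Function.comp, hc'def, if_neg (Nat.succ_ne_zero i)]
      rw [htail]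
      simp only [hc'def, if_pos rfl, if_neg (Nat.succ_ne_zero q)]
      rw [pow_add, ← mul_assoc, ← mul_assoc, ← mul_assoc]
    rw [hprod, hkey, hBE.2 p u c' hu (fun i h1 h2 => by
        simp only [hc'def, if_neg (by omega : ¬ i = 0)]; exact hc i h1 h2),
      hBE.2 p u c hu hc]

lemma BE_right (hι : ∀ a b, ι (a * b) = ι a * ι b) (hBE : IsBooleanExt G ι t φ φt)
    {L : List S} (hL : ∀ x ∈ L, IsLetter G ι t x) (a : ℕ) :
    φt (L.prod * t ^ a) = φt L.prod := by
  obtain ⟨p, u, c, hu, hc, hprod⟩ := rep_exists G ι t hι L hL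
  set c' : ℕ → ℕ := fun i => if i = p then c p + a else c i with hc'def
  have hkey : (((List.range p).map fun i => t ^ c i * ι (u i)).prod * t ^ c p) * t ^ a =
      ((List.range p).map fun i => t ^ c' i * ι (u i)).prod * t ^ c' p := by
    have htail : (List.range p).map (fun i => t ^ c' i * ι (u i)) =
        (List.range p).map (fun i => t ^ c i * ι (u i)) := by
      apply List.map_congr_left
      intro i hi
      rw [List.mem_range] at hi
      simp only [hc'def, if_neg (by omega : ¬ i = p)]
    rw [htail]
    simp only [hc'def, if_pos rfl]
    rw [pow_add, mul_assoc]
  rw [hprod, hkey, hBE.2 p u c' hu (fun i h1 h2 => by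
      simp only [hc'def, if_neg (by omega : ¬ i = p)]; exact hc i h1 h2),
    hBE.2 p u c hu hc]

lemma BE_insert_left (hι : ∀ a b, ι (a * b) = ι a * ι b) (hBE : IsBooleanExt G ι t φ φt)
    {L : List S} (hL : ∀ x ∈ L, IsLetter G ι t x) {P : S} (hP : ∃ a : ℕ, P = t ^ a) :
    φt (P * (t * L.prod)) = φt (P * (1 * L.prod)) := by
  obtain ⟨a, rfl⟩ := hP
  rw [one_mul, ← mul_assoc, ← pow_succ, BE_left G ι t hι hBE hL, BE_left G ι t hι hBE hL]

lemma BE_insert_right (hι : ∀ a b, ι (a * b) = ι a * ι b) (hBE : IsBooleanExt G ι t φ φt)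
    {L : List S} (hL : ∀ x ∈ L, IsLetter G ι t x) {P : S} (hP : ∃ a : ℕ, P = t ^ a) :
    φt (L.prod * (t * P)) = φt (L.prod * (1 * P)) := by
  obtain ⟨a, rfl⟩ := hP
  rw [one_mul, ← mul_assoc]
  have h1 : L.prod * t * t ^ a = L.prod * t ^ (a + 1) := by
    rw [mul_assoc, ← pow_succ']
  rw [h1, BE_right G ι t hι hBE hL, BE_right G ι t hι hBE hL]


end boolean



section ordProd
variable {M : Type*} [Monoid M]

lemma ordProd_congr {f g : ℕ → M} {a b : ℕ} (h : ∀ l, a ≤ l → l ≤ b → f l = g l) :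
    ordProd f a b = ordProd g a b := by
  unfold ordProd
  congr 1
  apply List.map_congr_left
  intro x hx
  rw [List.mem_range'_1] at hx
  exact h x hx.1 (by omega)

lemma ordProd_eq_one {f : ℕ → M} {a b : ℕ} (h : ∀ l, a ≤ l → l ≤ b → f l = 1) :
    ordProd f a b = 1 := by
  rw [ordProd]
  apply List.prod_eq_one
  intro x hx
  rcases List.mem_map.1 hx with ⟨l, hl, rfl⟩
  rw [List.mem_range'_1] at hl
  exact h l hl.1 (by omega)

lemma range'_split {a b l₀ : ℕ} (h1 : a ≤ l₀) (h2 : l₀ ≤ b) :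
    List.range' a (b + 1 - a) = List.range' a (l₀ - a) ++ l₀ :: List.range' (l₀ + 1) (b - l₀) := by
  have e1 : List.range' a (l₀ - a) ++ List.range' (a + 1 * (l₀ - a)) ((b + 1 - l₀)) =
      List.range' a ((b + 1 - l₀) + (l₀ - a)) := by
    rw [show b + 1 - l₀ + (l₀ - a) = (l₀ - a) + (b + 1 - l₀) from Nat.add_comm _ _]
    exact List.range'_append
  have ha : a + 1 * (l₀ - a) = l₀ := by omega
  have hb : (b + 1 - l₀) + (l₀ - a) = b + 1 - a := by omega
  rw [ha, hb] at e1
  rw [← e1]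
  congr 1
  have h3 : b + 1 - l₀ = (b - l₀) + 1 := by omega
  rw [h3, List.range'_succ]

lemma ordProd_split {f : ℕ → M} {a b l₀ : ℕ} (h0 : 1 ≤ l₀) (h1 : a ≤ l₀) (h2 : l₀ ≤ b) :
    ordProd f a b = ordProd f a (l₀ - 1) * (f l₀ * ordProd f (l₀ + 1) b) := by
  unfold ordProd
  rw [range'_split h1 h2, List.map_append, List.prod_append, List.map_cons, List.prod_cons]
  have e1 : l₀ - 1 + 1 - a = l₀ - a := by omega
  have e2 : b + 1 - (l₀ + 1) = b - l₀ := by omega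
  rw [e1, e2]

lemma commute_ordProd {x : M} {f : ℕ → M} {a b : ℕ}
    (h : ∀ l, a ≤ l → l ≤ b → Commute x (f l)) : Commute x (ordProd f a b) := by
  apply Commute.list_prod_right
  intro y hy
  rcases List.mem_map.1 hy with ⟨l, hl, rfl⟩
  rw [List.mem_range'_1] at hl
  exact h l hl.1 (by omega)

lemma ordProd_mul_at {f : ℕ → M} {z : M} {l₀ m : ℕ}
    (h1 : 1 ≤ l₀) (h2 : l₀ ≤ m) (hcom : ∀ l, l₀ < l → l ≤ m → Commute z (f l)) :
    ordProd f 1 m * z = ordProd (fun l => if l = l₀ then f l * z else f l) 1 m := by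
  rw [ordProd_split (f := f) h1 h1 h2,
    ordProd_split (f := fun l => if l = l₀ then f l * z else f l) h1 h1 h2]
  have hc2 : Commute z (ordProd f (l₀ + 1) m) :=
    commute_ordProd (fun l hl1 hl2 => hcom l (by omega) hl2)
  have e1 : ordProd (fun l => if l = l₀ then f l * z else f l) 1 (l₀ - 1) =
      ordProd f 1 (l₀ - 1) := ordProd_congr (fun l hl1 hl2 => by simp only [if_neg (by omega : ¬ l = l₀)])
  have e2 : ordProd (fun l => if l = l₀ then f l * z else f l) (l₀ + 1) m =
      ordProd f (l₀ + 1) m := ordProd_congr (fun l hl1 hl2 => by simp only [if_neg (by omega : ¬ l = l₀)])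
  rw [e1, e2]
  simp only [eq_self_iff_true, if_true]
  rw [mul_assoc, mul_assoc, ← hc2.eq, ← mul_assoc (f l₀)]

lemma ordProd_mul_run {m : ℕ} (s : ℕ → M)
    (hcs : ∀ l l', l ≠ l' → Commute (s l) (s l')) :
    ∀ (j a : ℕ) (f : ℕ → M), 1 ≤ a → a + j ≤ m + 1 →
      (∀ l l', l ≠ l' → Commute (s l) (f l')) →
      ordProd f 1 m * ((List.range' a j).map s).prod =
        ordProd (fun l => if a ≤ l ∧ l < a + j then f l * s l else f l) 1 m := by
  intro j
  induction j with
  | zero =>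
      intro a f h1 h2 hcf
      simp only [List.range'_zero, List.map_nil, List.prod_nil, mul_one]
      exact (ordProd_congr fun l _ _ => by rw [if_neg (by omega : ¬ (a ≤ l ∧ l < a + 0))]).symm
  | succ j ih =>
      intro a f h1 h2 hcf
      rw [List.range'_succ, List.map_cons, List.prod_cons, ← mul_assoc,
        ordProd_mul_at h1 (by omega) (fun l hl1 hl2 => hcf a l (by omega)),
        ih (a + 1) _ (by omega) (by omega) ?_]
      · apply ordProd_congr
        intro l hl1 hl2
        by_cases h : l = a
        · rw [h]
          simp only [if_neg (show ¬ (a + 1 ≤ a ∧ a < a + 1 + j) by omega), eq_self_iff_true,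
            if_true, if_pos (show a ≤ a ∧ a < a + (j + 1) by omega)]
        · simp only [if_neg h]
          by_cases h' : a + 1 ≤ l ∧ l < a + 1 + j
          · rw [if_pos h', if_pos (by omega : a ≤ l ∧ l < a + (j + 1))]
          · rw [if_neg h', if_neg (by omega : ¬ (a ≤ l ∧ l < a + (j + 1)))]
      · intro l l' hne
        by_cases h : l' = a
        · have hla : l ≠ a := fun e => hne (e.trans h.symm)
          simp only [if_pos h, h]
          exact (hcf l a hla).mul_right (hcs l a hla)
        · simp only [if_neg h]
          exact hcf l l' hne

lemma range_map_prod_split (f : ℕ → M) {n i₀ : ℕ} (h : i₀ < n) :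
    ((List.range n).map f).prod =
      ((List.range i₀).map f).prod * (f i₀ * ((List.range' (i₀ + 1) (n - (i₀ + 1))).map f).prod) := by
  rw [List.range_eq_range', List.range_eq_range']
  have h5 : List.range' 0 n = List.range' 0 i₀ ++ i₀ :: List.range' (i₀ + 1) (n - 1 - i₀) := by
    have := range'_split (a := 0) (b := n - 1) (l₀ := i₀) (by omega) (by omega)
    simpa [Nat.sub_zero, show n - 1 + 1 - 0 = n by omega] using this
  rw [h5, List.map_append, List.prod_append, List.map_cons, List.prod_cons,
    show n - 1 - i₀ = n - (i₀ + 1) by omega]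

end ordProd
section sign
variable {T : Type*} [Ring T]

lemma prod_zsmul (x : ℕ → T) (ε : ℕ → ℕ) (n : ℕ) :
    ((List.range n).map fun i => ((-1 : ℤ) ^ ε i) • x i).prod =
      ((-1 : ℤ) ^ (∑ i ∈ Finset.range n, ε i)) • ((List.range n).map x).prod := by
  induction n with
  | zero => simp
  | succ n ih =>
      rw [List.range_succ, List.map_append, List.map_append, List.prod_append, List.prod_append,
        List.map_singleton, List.prod_singleton, List.map_singleton, List.prod_singleton, ih,
        Finset.sum_range_succ, pow_add, smul_mul_assoc, mul_smul_comm, smul_smul]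

end sign

section prodsums
variable {T : Type*} [Semiring T]

lemma cons_sum_piFinset {n : ℕ} (s : Finset ℕ) (F : (Fin (n + 1) → ℕ) → T) :
    ∑ g ∈ Fintype.piFinset (fun _ : Fin (n + 1) => s), F g =
      ∑ v ∈ s, ∑ g ∈ Fintype.piFinset (fun _ : Fin n => s), F (Fin.cons v g) := by
  rw [← Finset.sum_product']
  refine Finset.sum_nbij' (fun g => (g 0, fun i => g i.succ)) (fun p => Fin.cons p.1 p.2)
    ?_ ?_ ?_ ?_ ?_
  · intro g hg
    rw [Fintype.mem_piFinset] at hg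
    exact Finset.mem_product.2 ⟨hg 0, Fintype.mem_piFinset.2 fun i => hg i.succ⟩
  · intro p hp
    rw [Fintype.mem_piFinset]
    rcases Finset.mem_product.1 hp with ⟨h1, h2⟩
    intro a
    refine Fin.cases ?_ ?_ a
    · simpa using h1
    · intro i; simpa using Fintype.mem_piFinset.1 h2 i
  · intro g _
    exact Fin.cons_self_tail g
  · intro p _
    simp
  · intro g _
    exact (congrArg F (Fin.cons_self_tail g)).symm

lemma ofFn_prod_sum : ∀ (n : ℕ) (s : Finset ℕ) (f : Fin n → ℕ → T),
    (List.ofFn fun i => ∑ v ∈ s, f i v).prod =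
      ∑ g ∈ Fintype.piFinset (fun _ : Fin n => s), (List.ofFn fun i => f i (g i)).prod := by
  intro n
  induction n with
  | zero => intro s f; simp
  | succ n ih =>
      intro s f
      rw [cons_sum_piFinset]
      rw [List.ofFn_succ, List.prod_cons, Finset.sum_mul]
      refine Finset.sum_congr rfl fun v _ => ?_
      rw [ih s (fun i => f i.succ), Finset.mul_sum]
      refine Finset.sum_congr rfl fun g _ => ?_
      rw [List.ofFn_succ, List.prod_cons]
      simp

end prodsums

lemma range_map_eq_ofFn {α : Type*} (F : ℕ → α) (n : ℕ) :
    (List.range n).map F = List.ofFn (fun i : Fin n => F i.1) := by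
  apply List.ext_getElem <;> simp

section flip
variable {R S : Type*} [Ring R] [Algebra ℂ R] [Ring S] [Algebra ℂ S]


lemma flip_letter (G : Set R) (ι : R → S) (t : S) {φ : R →ₗ[ℂ] ℂ} {φt : S →ₗ[ℂ] ℂ}
    (hι : ∀ a b, ι (a * b) = ι a * ι b) (hBE : IsBooleanExt G ι t φ φt)
    {n i₀ : ℕ} (hi₀ : i₀ < n) {Lf Lf' : ℕ → S}
    (hl : ∀ i, i < n → IsLetter G ι t (Lf i)) (hl' : ∀ i, i < n → IsLetter G ι t (Lf' i))
    (hagree : ∀ i, i < n → i ≠ i₀ → Lf i = Lf' i) (h0 : Lf i₀ = t) (h1 : Lf' i₀ = 1)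
    (hside : (∀ j, j < i₀ → (Lf j = 1 ∨ Lf j = t)) ∨
      (∀ j, i₀ < j → j < n → (Lf j = 1 ∨ Lf j = t))) :
    φt (((List.range n).map Lf).prod) = φt (((List.range n).map Lf').prod) := by
  rw [range_map_prod_split Lf hi₀, range_map_prod_split Lf' hi₀]
  have hpre : (List.range i₀).map Lf' = (List.range i₀).map Lf :=
    List.map_congr_left (fun i hi => by
      rw [List.mem_range] at hi
      exact (hagree i (by omega) (by omega)).symm)
  have hpost : (List.range' (i₀ + 1) (n - (i₀ + 1))).map Lf' =
      (List.range' (i₀ + 1) (n - (i₀ + 1))).map Lf :=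
    List.map_congr_left (fun i hi => by
      rw [List.mem_range'_1] at hi
      exact (hagree i (by omega) (by omega)).symm)
  rw [hpre, hpost, h0, h1]
  have hlpost : ∀ x ∈ (List.range' (i₀ + 1) (n - (i₀ + 1))).map Lf, IsLetter G ι t x := by
    intro x hx
    rcases List.mem_map.1 hx with ⟨i, hi, rfl⟩
    rw [List.mem_range'_1] at hi
    exact hl i (by omega)
  have hlpre : ∀ x ∈ (List.range i₀).map Lf, IsLetter G ι t x := by
    intro x hx
    rcases List.mem_map.1 hx with ⟨i, hi, rfl⟩
    rw [List.mem_range] at hi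
    exact hl i (by omega)
  rcases hside with hs | hs
  · refine BE_insert_left G ι t hι hBE hlpost ?_
    apply prod_eq_pow
    intro x hx
    rcases List.mem_map.1 hx with ⟨i, hi, rfl⟩
    rw [List.mem_range] at hi
    exact hs i hi
  · refine BE_insert_right G ι t hι hBE hlpre ?_
    apply prod_eq_pow
    intro x hx
    rcases List.mem_map.1 hx with ⟨i, hi, rfl⟩
    rw [List.mem_range'_1] at hi
    exact hs i (by omega) (by omega)

end flip

end PyrAux


/- In the following, for `i : Fin 2`:
* `A i` plays the role of the unital free *-algebra `𝒜ᵢ₊₁` with generating set `G i`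
  (closed under the involution), so that `A i` is generated by `G i`;
* `B i` plays the role of `𝒜̃ᵢ₊₁ = 𝒜ᵢ₊₁ * ℂ[t]`, with canonical embedding `ι i` and with
  the hermitian separator `t i`, which together generate `B i`;
* `T` plays the role of the tensor product `𝒜̃^{(m)} = 𝒜̃₁^{⊗m} ⊗ 𝒜̃₂^{⊗m}`, with the
  canonical commuting embeddings `e i k : B i → T` onto the tensor sites `k = 1, …, m`
  (site `k` of block `i`), whose images generate `T`. -/
theorem pyramidal_formula
    {A B : Fin 2 → Type*} {T : Type*}
    [∀ i, Ring (A i)] [∀ i, Algebra ℂ (A i)] [∀ i, StarRing (A i)] [∀ i, StarModule ℂ (A i)]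
    [∀ i, Ring (B i)] [∀ i, Algebra ℂ (B i)] [∀ i, StarRing (B i)] [∀ i, StarModule ℂ (B i)]
    [Ring T] [Algebra ℂ T] [StarRing T] [StarModule ℂ T]
    (G : ∀ i, Set (A i)) (hG : ∀ i, ∀ x ∈ G i, star x ∈ G i)
    (hA : ∀ i, Algebra.adjoin ℂ (G i) = ⊤)
    (ι : ∀ i, A i →⋆ₐ[ℂ] B i) (t : ∀ i, B i) (ht : ∀ i, star (t i) = t i)
    (hB : ∀ i, Algebra.adjoin ℂ (Set.range (ι i) ∪ {t i}) = ⊤)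
    (m : ℕ) (hm : 1 ≤ m)
    (e : ∀ i, ℕ → B i →⋆ₐ[ℂ] T)
    (hcomm : ∀ (i i' : Fin 2) (k k' : ℕ), (i, k) ≠ (i', k') →
      ∀ (x : B i) (y : B i'), Commute (e i k x) (e i' k' y))
    (hT : Algebra.adjoin ℂ
      {x : T | ∃ (i : Fin 2) (k : ℕ), 1 ≤ k ∧ k ≤ m ∧ ∃ b : B i, x = e i k b} = ⊤)
    -- the pairs of states `(φᵢ, ψᵢ)` on `A i` and their Boolean extensions `φt i`, `ψt i`
    (φ ψ : ∀ i, A i →ₗ[ℂ] ℂ) (hφ : ∀ i, IsState (φ i)) (hψ : ∀ i, IsState (ψ i))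
    (φt ψt : ∀ i, B i →ₗ[ℂ] ℂ)
    (hφt : ∀ i, IsBooleanExt (G i) (⇑(ι i)) (t i) (φ i) (φt i))
    (hψt : ∀ i, IsBooleanExt (G i) (⇑(ι i)) (t i) (ψ i) (ψt i))
    -- the tensor product state `Φ̃^{(m)} = φ̃₁ ⊗ ψ̃₁^{⊗(m-1)} ⊗ φ̃₂ ⊗ ψ̃₂^{⊗(m-1)}`
    (Φ : T →ₗ[ℂ] ℂ)
    (hΦ : ∀ (x : ℕ → B 0) (y : ℕ → B 1),
      Φ (ordProd (fun k => e 0 k (x k)) 1 m * ordProd (fun k => e 1 k (y k)) 1 m) =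
        ordProd (fun k => if k = 1 then φt 0 (x k) else ψt 0 (x k)) 1 m *
          ordProd (fun k => if k = 1 then φt 1 (y k) else ψt 1 (y k)) 1 m)
    -- the components `j_{1,r}^{(s)}(w) = i_{r,s}(w) ⊗ (t_{[r,s]} - t_{[r-1,s]})` and
    -- `j_{2,r}^{(s)}(v) = (t_{[r,s]} - t_{[r-1,s]}) ⊗ i_{r,s}(v)`  (here `m` plays the
    -- role of `s`, and `j_k^{(s)} = Σ_{r=1}^s j_{k,r}^{(s)}`)
    (jc : ∀ i, ℕ → A i → T)
    (hjc1 : ∀ (r : ℕ) (x : A 0), jc 0 r x =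
      embSite (fun l y => e 0 l y) m r (ι 0 x) *
        (tBlock (fun l => e 1 l (t 1)) r m - tBlock (fun l => e 1 l (t 1)) (r - 1) m))
    (hjc2 : ∀ (r : ℕ) (x : A 1), jc 1 r x =
      (tBlock (fun l => e 0 l (t 0)) r m - tBlock (fun l => e 0 l (t 0)) (r - 1) m) *
        embSite (fun l y => e 1 l y) m r (ι 1 x))
    -- `n ≤ s + 1` non-empty words `w i` in `𝒜_{k i}`, with consecutive indices distinct
    (n : ℕ) (hn : n ≤ m + 1) (k : ℕ → Fin 2) (w : ∀ i, A (k i))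
    (hk : ∀ i, i + 1 < n → k i ≠ k (i + 1))
    (hw : ∀ i < n, IsWord (G (k i)) (w i)) :
    -- `Φ̃^{(s)}(j_{k₁}^{(s)}(w₁) ⋯ j_{kₙ}^{(s)}(wₙ))
    --   = Σ_{1 ≤ mᵢ ≤ min(i, n+1-i)} Φ̃^{(s)}(j_{k₁,m₁}^{(s)}(w₁) ⋯ j_{kₙ,mₙ}^{(s)}(wₙ))`
    Φ (((List.range n).map fun i => ∑ r ∈ Finset.Icc 1 m, jc (k i) r (w i)).prod) =
      ∑ r : (∀ i : Fin n, Fin (min (i.1 + 1) (n - i.1))),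
        Φ ((List.ofFn fun i : Fin n => jc (k i.1) ((r i : ℕ) + 1) (w i.1)).prod) := by
    classical
  have hne01 : ∀ (a b : ℕ), ((0 : Fin 2), a) ≠ ((1 : Fin 2), b) := by
    intro a b hE
    have h0 : (0 : Fin 2) = 1 := congrArg Prod.fst hE
    exact absurd h0 (by decide)
  have hne_same : ∀ (i : Fin 2) (a b : ℕ), a ≠ b → ((i, a) : Fin 2 × ℕ) ≠ (i, b) := by
    intro i a b h hE
    exact h (congrArg Prod.snd hE)
  have gen0 : ∀ (κ : Fin 2) (h : κ = 0) (v : A κ) (r : ℕ),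
      jc κ r v = jc 0 r (cast (congrArg A h) v) ∧
        (IsWord (G κ) v → IsWord (G 0) (cast (congrArg A h) v)) := by
    intro κ h v r
    subst h
    exact ⟨rfl, id⟩
  have gen1 : ∀ (κ : Fin 2) (h : κ = 1) (v : A κ) (r : ℕ),
      jc κ r v = jc 1 r (cast (congrArg A h) v) ∧
        (IsWord (G κ) v → IsWord (G 1) (cast (congrArg A h) v)) := by
    intro κ h v r
    subst h
    exact ⟨rfl, id⟩
  set w0 : ℕ → A 0 := fun i => if h : k i = 0 then cast (congrArg A h) (w i) else 1 with hw0def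
  set w1 : ℕ → A 1 := fun i => if h : k i = 1 then cast (congrArg A h) (w i) else 1 with hw1def
  have hjck0 : ∀ (i r : ℕ), k i = 0 → jc (k i) r (w i) = jc 0 r (w0 i) := by
    intro i r h
    rw [(gen0 (k i) h (w i) r).1]
    simp only [hw0def, dif_pos h]
  have hjck1 : ∀ (i r : ℕ), k i = 1 → jc (k i) r (w i) = jc 1 r (w1 i) := by
    intro i r h
    rw [(gen1 (k i) h (w i) r).1]
    simp only [hw1def, dif_pos h]
  have hword0 : ∀ i, i < n → k i = 0 → IsWord (G 0) (w0 i) := by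
    intro i hi h
    have := (gen0 (k i) h (w i) 0).2 (hw i hi)
    simpa only [hw0def, dif_pos h] using this
  have hword1 : ∀ i, i < n → k i = 1 → IsWord (G 1) (w1 i) := by
    intro i hi h
    have := (gen1 (k i) h (w i) 0).2 (hw i hi)
    simpa only [hw1def, dif_pos h] using this
  set mono : (ℕ → ℕ) → ℕ → ℕ → T := fun gg i v =>
    if k i = 0 then
      embSite (fun l y => e 0 l y) m (gg i) ((ι 0) (w0 i)) *
        tBlock (fun l => e 1 l (t 1)) (gg i - v) m
    else
      tBlock (fun l => e 0 l (t 0)) (gg i - v) m *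
        embSite (fun l y => e 1 l y) m (gg i) ((ι 1) (w1 i)) with hmono
  have hjc_split : ∀ (gg : ℕ → ℕ) (i : ℕ), i < n →
      jc (k i) (gg i) (w i) = mono gg i 0 - mono gg i 1 := by
    intro gg i hi
    rcases PyrAux.fin2 (k i) with h | h
    · rw [hjck0 i (gg i) h, hjc1]
      simp only [hmono, if_pos h, Nat.sub_zero, mul_sub]
    · rw [hjck1 i (gg i) h, hjc2]
      simp only [hmono, if_neg (show ¬ k i = 0 by rw [h]; decide), Nat.sub_zero, sub_mul]
  set L0 : (ℕ → ℕ) → (ℕ → ℕ) → ℕ → ℕ → B 0 := fun gg cc i l =>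
    if k i = 0 then (if gg i = l then (ι 0) (w0 i) else 1)
    else (if cc i ≤ l ∧ l ≤ m then t 0 else 1) with hL0
  set L1 : (ℕ → ℕ) → (ℕ → ℕ) → ℕ → ℕ → B 1 := fun gg cc i l =>
    if k i = 1 then (if gg i = l then (ι 1) (w1 i) else 1)
    else (if cc i ≤ l ∧ l ≤ m then t 1 else 1) with hL1
  set XX : (ℕ → ℕ) → (ℕ → ℕ) → ℕ → ℕ → B 0 := fun gg cc q l =>
    ((List.range q).map fun i => L0 gg cc i l).prod with hXXdef
  set YY : (ℕ → ℕ) → (ℕ → ℕ) → ℕ → ℕ → B 1 := fun gg cc q l =>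
    ((List.range q).map fun i => L1 gg cc i l).prod with hYYdef
  -- normal ordering of a monomial
  have NO : ∀ (gg : ℕ → ℕ), (∀ i, i < n → 1 ≤ gg i ∧ gg i ≤ m) →
      ∀ (ε : ℕ → ℕ), (∀ i, i < n → 1 ≤ gg i - ε i) →
      ∀ q, q ≤ n →
      ((List.range q).map fun i => mono gg i (ε i)).prod =
        ordProd (fun l => e 0 l (XX gg (fun i => gg i - ε i) q l)) 1 m *
          ordProd (fun l => e 1 l (YY gg (fun i => gg i - ε i) q l)) 1 m := by
    intro gg hgg ε hε q
    induction q with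
    | zero =>
        intro _
        have h1 : ∀ l, 1 ≤ l → l ≤ m → e 0 l (XX gg (fun i => gg i - ε i) 0 l) = 1 := by
          intro l _ _
          simp [hXXdef]
        have h2 : ∀ l, 1 ≤ l → l ≤ m → e 1 l (YY gg (fun i => gg i - ε i) 0 l) = 1 := by
          intro l _ _
          simp [hYYdef]
        rw [PyrAux.ordProd_eq_one h1, PyrAux.ordProd_eq_one h2, one_mul]
        simp
    | succ q ih =>
        intro hq
        have hqn : q < n := hq
        have hgq := hgg q hqn
        have hcq1 : 1 ≤ gg q - ε q := hε q hqn
        have hcq2 : gg q - ε q ≤ m := by omega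
        rw [List.range_succ, List.map_append, List.map_singleton, List.prod_append,
          List.prod_singleton, ih (by omega)]
        have hXs : ∀ l, XX gg (fun i => gg i - ε i) (q + 1) l =
            XX gg (fun i => gg i - ε i) q l * L0 gg (fun i => gg i - ε i) q l := by
          intro l
          simp [hXXdef, List.range_succ]
        have hYs : ∀ l, YY gg (fun i => gg i - ε i) (q + 1) l =
            YY gg (fun i => gg i - ε i) q l * L1 gg (fun i => gg i - ε i) q l := by
          intro l
          simp [hYYdef, List.range_succ]
        rcases PyrAux.fin2 (k q) with hk0 | hk0
        · have hmq : mono gg q (ε q) =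
              e 0 (gg q) ((ι 0) (w0 q)) * ordProd (fun l => e 1 l (t 1)) (gg q - ε q) m := by
            simp only [hmono, if_pos hk0, embSite, tBlock,
              if_pos (show 1 ≤ gg q ∧ gg q ≤ m from ⟨hgq.1, hgq.2⟩),
              if_neg (show ¬ (gg q - ε q) = 0 by omega)]
          rw [hmq]
          have hcEB : Commute (e 0 (gg q) ((ι 0) (w0 q)))
              (ordProd (fun l => e 1 l (YY gg (fun i => gg i - ε i) q l)) 1 m) :=
            PyrAux.commute_ordProd (fun l _ _ => hcomm 0 1 (gg q) l (hne01 _ _) _ _)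
          have step1 :
              ordProd (fun l => e 0 l (XX gg (fun i => gg i - ε i) q l)) 1 m *
                ordProd (fun l => e 1 l (YY gg (fun i => gg i - ε i) q l)) 1 m *
                (e 0 (gg q) ((ι 0) (w0 q)) * ordProd (fun l => e 1 l (t 1)) (gg q - ε q) m) =
              ((ordProd (fun l => e 0 l (XX gg (fun i => gg i - ε i) q l)) 1 m *
                  e 0 (gg q) ((ι 0) (w0 q))) *
                ordProd (fun l => e 1 l (YY gg (fun i => gg i - ε i) q l)) 1 m) *
                ordProd (fun l => e 1 l (t 1)) (gg q - ε q) m := by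
            exact PyrAux.reorder1 hcEB
          rw [step1]
          have step2 : ordProd (fun l => e 0 l (XX gg (fun i => gg i - ε i) q l)) 1 m *
              e 0 (gg q) ((ι 0) (w0 q)) =
              ordProd (fun l => e 0 l (XX gg (fun i => gg i - ε i) (q + 1) l)) 1 m := by
            rw [PyrAux.ordProd_mul_at hgq.1 hgq.2
              (fun l hl1 hl2 => hcomm 0 0 (gg q) l (hne_same _ _ _ (by omega)) _ _)]
            apply PyrAux.ordProd_congr
            intro l hl1 hl2
            rw [hXs l, map_mul]
            by_cases hl : l = gg q
            · rw [if_pos hl]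
              congr 1
              subst hl
              simp only [hL0, if_pos hk0, eq_self_iff_true, if_true]
            · rw [if_neg hl]
              have : L0 gg (fun i => gg i - ε i) q l = 1 := by
                simp only [hL0, if_pos hk0, if_neg (show ¬ gg q = l from fun hE => hl hE.symm)]
              rw [this, map_one, mul_one]
          rw [step2, mul_assoc]
          congr 1
          have hrun := PyrAux.ordProd_mul_run (m := m) (fun l => e 1 l (t 1))
            (fun l l' hne => hcomm 1 1 l l' (hne_same _ _ _ hne) _ _)
            (m + 1 - (gg q - ε q)) (gg q - ε q)
            (fun l => e 1 l (YY gg (fun i => gg i - ε i) q l)) hcq1 (by omega)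
            (fun l l' hne => hcomm 1 1 l l' (hne_same _ _ _ hne) _ _)
          rw [show ordProd (fun l => e 1 l (t 1)) (gg q - ε q) m =
            ((List.range' (gg q - ε q) (m + 1 - (gg q - ε q))).map
              (fun l => e 1 l (t 1))).prod from rfl, hrun]
          apply PyrAux.ordProd_congr
          intro l hl1 hl2
          rw [hYs l, map_mul]
          by_cases hcl : gg q - ε q ≤ l ∧ l < gg q - ε q + (m + 1 - (gg q - ε q))
          · rw [if_pos hcl]
            congr 1
            simp only [hL1, if_neg (show ¬ k q = 1 by rw [hk0]; decide),
              if_pos (show gg q - ε q ≤ l ∧ l ≤ m by omega)]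
          · rw [if_neg hcl]
            have : L1 gg (fun i => gg i - ε i) q l = 1 := by
              simp only [hL1, if_neg (show ¬ k q = 1 by rw [hk0]; decide),
                if_neg (show ¬ (gg q - ε q ≤ l ∧ l ≤ m) by omega)]
            rw [this, map_one, mul_one]
        · have hmq : mono gg q (ε q) =
              ordProd (fun l => e 0 l (t 0)) (gg q - ε q) m * e 1 (gg q) ((ι 1) (w1 q)) := by
            simp only [hmono, if_neg (show ¬ k q = 0 by rw [hk0]; decide), embSite, tBlock,
              if_pos (show 1 ≤ gg q ∧ gg q ≤ m from ⟨hgq.1, hgq.2⟩),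
              if_neg (show ¬ (gg q - ε q) = 0 by omega)]
          rw [hmq]
          have hcRB : Commute (ordProd (fun l => e 0 l (t 0)) (gg q - ε q) m)
              (ordProd (fun l => e 1 l (YY gg (fun i => gg i - ε i) q l)) 1 m) :=
            PyrAux.commute_ordProd (fun l _ _ =>
              (PyrAux.commute_ordProd (fun l' _ _ => hcomm 1 0 l l' ((hne01 l' l).symm) _ _)).symm)
          have step1 :
              ordProd (fun l => e 0 l (XX gg (fun i => gg i - ε i) q l)) 1 m *
                ordProd (fun l => e 1 l (YY gg (fun i => gg i - ε i) q l)) 1 m *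
                (ordProd (fun l => e 0 l (t 0)) (gg q - ε q) m * e 1 (gg q) ((ι 1) (w1 q))) =
              ((ordProd (fun l => e 0 l (XX gg (fun i => gg i - ε i) q l)) 1 m *
                  ordProd (fun l => e 0 l (t 0)) (gg q - ε q) m) *
                ordProd (fun l => e 1 l (YY gg (fun i => gg i - ε i) q l)) 1 m) *
                e 1 (gg q) ((ι 1) (w1 q)) := by
            exact PyrAux.reorder1 hcRB
          rw [step1]
          have step2 : ordProd (fun l => e 0 l (XX gg (fun i => gg i - ε i) q l)) 1 m *
              ordProd (fun l => e 0 l (t 0)) (gg q - ε q) m =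
              ordProd (fun l => e 0 l (XX gg (fun i => gg i - ε i) (q + 1) l)) 1 m := by
            have hrun := PyrAux.ordProd_mul_run (m := m) (fun l => e 0 l (t 0))
              (fun l l' hne => hcomm 0 0 l l' (hne_same _ _ _ hne) _ _)
              (m + 1 - (gg q - ε q)) (gg q - ε q)
              (fun l => e 0 l (XX gg (fun i => gg i - ε i) q l)) hcq1 (by omega)
              (fun l l' hne => hcomm 0 0 l l' (hne_same _ _ _ hne) _ _)
            rw [show ordProd (fun l => e 0 l (t 0)) (gg q - ε q) m =
              ((List.range' (gg q - ε q) (m + 1 - (gg q - ε q))).map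
                (fun l => e 0 l (t 0))).prod from rfl, hrun]
            apply PyrAux.ordProd_congr
            intro l hl1 hl2
            rw [hXs l, map_mul]
            by_cases hcl : gg q - ε q ≤ l ∧ l < gg q - ε q + (m + 1 - (gg q - ε q))
            · rw [if_pos hcl]
              congr 1
              simp only [hL0, if_neg (show ¬ k q = 0 by rw [hk0]; decide),
                if_pos (show gg q - ε q ≤ l ∧ l ≤ m by omega)]
            · rw [if_neg hcl]
              have : L0 gg (fun i => gg i - ε i) q l = 1 := by
                simp only [hL0, if_neg (show ¬ k q = 0 by rw [hk0]; decide),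
                  if_neg (show ¬ (gg q - ε q ≤ l ∧ l ≤ m) by omega)]
              rw [this, map_one, mul_one]
          rw [step2, mul_assoc]
          congr 1
          rw [PyrAux.ordProd_mul_at hgq.1 hgq.2
            (fun l hl1 hl2 => hcomm 1 1 (gg q) l (hne_same _ _ _ (by omega)) _ _)]
          apply PyrAux.ordProd_congr
          intro l hl1 hl2
          rw [hYs l, map_mul]
          by_cases hl : l = gg q
          · rw [if_pos hl]
            congr 1
            subst hl
            simp only [hL1, if_pos hk0, eq_self_iff_true, if_true]
          · rw [if_neg hl]
            have : L1 gg (fun i => gg i - ε i) q l = 1 := by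
              simp only [hL1, if_pos hk0, if_neg (show ¬ gg q = l from fun hE => hl hE.symm)]
            rw [this, map_one, mul_one]
  -- Φ is invariant under flipping the ε-expansion index at a "free" factor i₀
  have flipPhi : ∀ (gg : ℕ → ℕ), (∀ i, i < n → 1 ≤ gg i ∧ gg i ≤ m) →
      ∀ (i₀ : ℕ), i₀ < n → 2 ≤ gg i₀ →
      ((∀ j, j < i₀ → gg j ≠ gg i₀ - 1) ∨ (∀ j, i₀ < j → j < n → gg j ≠ gg i₀ - 1)) →
      ∀ (εa εb : ℕ → ℕ), (∀ i, εa i ≤ 1) → (∀ i, εb i ≤ 1) →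
      (∀ i, i ≠ i₀ → εa i = εb i) →
      Φ (((List.range n).map fun i => mono gg i (εa i)).prod) =
        Φ (((List.range n).map fun i => mono gg i (εb i)).prod) := by
    intro gg hgg i₀ hi₀n hg2 hside εa εb hεa hεb hagree
    by_cases hz : ∃ j, j < n ∧ j ≠ i₀ ∧ εa j = 1 ∧ gg j = 1
    · obtain ⟨j, hjn, hji, hεaj, hggj⟩ := hz
      have hmz : ∀ (ε' : ℕ → ℕ), ε' j = 1 → mono gg j (ε' j) = 0 := by
        intro ε' hj
        rw [hj]
        rcases PyrAux.fin2 (k j) with h | h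
        · simp [hmono, h, hggj, tBlock]
        · simp [hmono, h, hggj, tBlock]
      have hzprod : ∀ (ε' : ℕ → ℕ), ε' j = 1 →
          ((List.range n).map fun i => mono gg i (ε' i)).prod = 0 := by
        intro ε' hj
        apply List.prod_eq_zero
        have hmem : mono gg j (ε' j) ∈ (List.range n).map fun i => mono gg i (ε' i) :=
          List.mem_map_of_mem (List.mem_range.2 hjn)
        rwa [hmz ε' hj] at hmem
      rw [hzprod εa hεaj, hzprod εb (by rw [← hagree j hji]; exact hεaj), map_zero]
    · push_neg at hz
      have hbound : ∀ (ε' : ℕ → ℕ), (∀ i, ε' i ≤ 1) → (∀ i, i ≠ i₀ → ε' i = εa i) →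
          ∀ i, i < n → 1 ≤ gg i - ε' i := by
        intro ε' hb hag i hi
        by_cases hii : i = i₀
        · subst hii
          have := hb i
          omega
        · have h1 := (hgg i hi).1
          have h2 := hb i
          rcases Nat.lt_or_ge (ε' i) 1 with h | h
          · omega
          · have hε1 : ε' i = 1 := by omega
            have hεa1 : εa i = 1 := by rw [← hag i hii]; exact hε1
            have := hz i hi hii hεa1
            omega
      have hba : ∀ i, i < n → 1 ≤ gg i - εa i := hbound εa hεa (fun i _ => rfl)
      have hbb : ∀ i, i < n → 1 ≤ gg i - εb i := hbound εb hεb (fun i hii => (hagree i hii).symm)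
      by_cases heq : εa i₀ = εb i₀
      · congr 2
        apply List.map_congr_left
        intro i hi
        by_cases hii : i = i₀
        · rw [hii, heq]
        · rw [hagree i hii]
      · have main : ∀ (εc εd : ℕ → ℕ), (∀ i, εc i ≤ 1) → (∀ i, εd i ≤ 1) →
            (∀ i, i ≠ i₀ → εc i = εd i) →
            (∀ i, i < n → 1 ≤ gg i - εc i) → (∀ i, i < n → 1 ≤ gg i - εd i) →
            εc i₀ = 1 → εd i₀ = 0 →
            Φ (((List.range n).map fun i => mono gg i (εc i)).prod) =
              Φ (((List.range n).map fun i => mono gg i (εd i)).prod) := by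
          intro εc εd hεc hεd hag hbc hbd hc1 hd0
          rw [NO gg hgg εc hbc n le_rfl, NO gg hgg εd hbd n le_rfl, hΦ, hΦ]
          have hcci : gg i₀ - εc i₀ = gg i₀ - 1 := by rw [hc1]
          have hcdi : gg i₀ - εd i₀ = gg i₀ := by rw [hd0]; omega
          have hccd : ∀ i, i ≠ i₀ → gg i - εc i = gg i - εd i := fun i hii => by
            rw [hag i hii]
          have hl₀1 : 1 ≤ gg i₀ - 1 := by omega
          have hl₀m : gg i₀ - 1 ≤ m := by have := (hgg i₀ hi₀n).2; omega
          have hLag0 : ∀ i l, i ≠ i₀ →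
              L0 gg (fun i => gg i - εc i) i l = L0 gg (fun i => gg i - εd i) i l := by
            intro i l hii
            simp only [hL0, hccd i hii]
          have hLag1 : ∀ i l, i ≠ i₀ →
              L1 gg (fun i => gg i - εc i) i l = L1 gg (fun i => gg i - εd i) i l := by
            intro i l hii
            simp only [hL1, hccd i hii]
          rcases PyrAux.fin2 (k i₀) with hk0 | hk0
          · -- k i₀ = 0 : block-0 site products identical, block-1 differs only at site gg i₀ - 1
            have hXeq : ∀ l, XX gg (fun i => gg i - εc i) n l = XX gg (fun i => gg i - εd i) n l := by
              intro l
              simp only [hXXdef]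
              refine congrArg List.prod (List.map_congr_left ?_)
              intro i _
              by_cases hii : i = i₀
              · rw [hii]
                simp only [hL0, if_pos hk0]
              · exact hLag0 i l hii
            have hYeq : ∀ l, l ≠ gg i₀ - 1 →
                YY gg (fun i => gg i - εc i) n l = YY gg (fun i => gg i - εd i) n l := by
              intro l hl
              simp only [hYYdef]
              refine congrArg List.prod (List.map_congr_left ?_)
              intro i _
              by_cases hii : i = i₀
              · rw [hii]
                simp only [hL1, if_neg (show ¬ k i₀ = 1 by rw [hk0]; decide), hcci, hcdi]
                by_cases h1 : gg i₀ - 1 ≤ l ∧ l ≤ m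
                · rw [if_pos h1, if_pos (show gg i₀ ≤ l ∧ l ≤ m by omega)]
                · rw [if_neg h1, if_neg (show ¬ (gg i₀ ≤ l ∧ l ≤ m) by omega)]
              · exact hLag1 i l hii
            congr 1
            · apply PyrAux.ordProd_congr
              intro l _ _
              rw [hXeq l]
            · rw [PyrAux.ordProd_split (f := fun l => if l = 1 then (φt 1)
                  (YY gg (fun i => gg i - εc i) n l) else (ψt 1) (YY gg (fun i => gg i - εc i) n l))
                  hl₀1 hl₀1 hl₀m,
                PyrAux.ordProd_split (f := fun l => if l = 1 then (φt 1)
                  (YY gg (fun i => gg i - εd i) n l) else (ψt 1) (YY gg (fun i => gg i - εd i) n l))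
                  hl₀1 hl₀1 hl₀m]
              have hflip : ∀ (φ' : A 1 →ₗ[ℂ] ℂ) (st : B 1 →ₗ[ℂ] ℂ),
                  IsBooleanExt (G 1) (⇑(ι 1)) (t 1) φ' st →
                  st (YY gg (fun i => gg i - εc i) n (gg i₀ - 1)) =
                    st (YY gg (fun i => gg i - εd i) n (gg i₀ - 1)) := by
                intro φ' st hBE
                simp only [hYYdef]
                refine PyrAux.flip_letter (G 1) (⇑(ι 1)) (t 1)
                  (fun a b => map_mul (ι 1) a b) hBE hi₀n ?_ ?_ ?_ ?_ ?_ ?_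
                · intro i hi
                  rcases PyrAux.fin2 (k i) with h | h
                  · simp only [hL1, if_neg (show ¬ k i = 1 by rw [h]; decide)]
                    by_cases hcnd : gg i - εc i ≤ gg i₀ - 1 ∧ gg i₀ - 1 ≤ m
                    · rw [if_pos hcnd]
                      exact Or.inr (Or.inl (by trivial))
                    · rw [if_neg hcnd]
                      exact Or.inl (by trivial)
                  · simp only [hL1, if_pos h]
                    by_cases hcnd : gg i = gg i₀ - 1
                    · rw [if_pos hcnd]
                      exact Or.inr (Or.inr ⟨w1 i, hword1 i hi h, rfl⟩)
                    · rw [if_neg hcnd]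
                      exact Or.inl (by trivial)
                · intro i hi
                  rcases PyrAux.fin2 (k i) with h | h
                  · simp only [hL1, if_neg (show ¬ k i = 1 by rw [h]; decide)]
                    by_cases hcnd : gg i - εd i ≤ gg i₀ - 1 ∧ gg i₀ - 1 ≤ m
                    · rw [if_pos hcnd]
                      exact Or.inr (Or.inl (by trivial))
                    · rw [if_neg hcnd]
                      exact Or.inl (by trivial)
                  · simp only [hL1, if_pos h]
                    by_cases hcnd : gg i = gg i₀ - 1
                    · rw [if_pos hcnd]
                      exact Or.inr (Or.inr ⟨w1 i, hword1 i hi h, rfl⟩)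
                    · rw [if_neg hcnd]
                      exact Or.inl (by trivial)
                · intro i _ hii
                  exact hLag1 i _ hii
                · simp only [hL1, if_neg (show ¬ k i₀ = 1 by rw [hk0]; decide), hcci]
                  rw [if_pos (show gg i₀ - 1 ≤ gg i₀ - 1 ∧ gg i₀ - 1 ≤ m from ⟨le_rfl, hl₀m⟩)]
                · simp only [hL1, if_neg (show ¬ k i₀ = 1 by rw [hk0]; decide), hcdi]
                  rw [if_neg (show ¬ (gg i₀ ≤ gg i₀ - 1 ∧ gg i₀ - 1 ≤ m) by omega)]
                · rcases hside with hs | hs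
                  · left
                    intro j hj
                    rcases PyrAux.fin2 (k j) with h | h
                    · simp only [hL1, if_neg (show ¬ k j = 1 by rw [h]; decide)]
                      by_cases hcnd : gg j - εc j ≤ gg i₀ - 1 ∧ gg i₀ - 1 ≤ m
                      · rw [if_pos hcnd]
                        exact Or.inr (by trivial)
                      · rw [if_neg hcnd]
                        exact Or.inl (by trivial)
                    · simp only [hL1, if_pos h, if_neg (hs j hj)]
                      exact Or.inl (by trivial)
                  · right
                    intro j hj hjn
                    rcases PyrAux.fin2 (k j) with h | h
                    · simp only [hL1, if_neg (show ¬ k j = 1 by rw [h]; decide)]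
                      by_cases hcnd : gg j - εc j ≤ gg i₀ - 1 ∧ gg i₀ - 1 ≤ m
                      · rw [if_pos hcnd]
                        exact Or.inr (by trivial)
                      · rw [if_neg hcnd]
                        exact Or.inl (by trivial)
                    · simp only [hL1, if_pos h, if_neg (hs j hj hjn)]
                      exact Or.inl (by trivial)
              congr 1
              · apply PyrAux.ordProd_congr
                intro l hl1 hl2
                rw [hYeq l (by omega)]
              congr 1
              · by_cases h1 : gg i₀ - 1 = 1
                · rw [if_pos h1, if_pos h1]
                  exact hflip (φ 1) (φt 1) (hφt 1)
                · rw [if_neg h1, if_neg h1]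
                  exact hflip (ψ 1) (ψt 1) (hψt 1)
              · apply PyrAux.ordProd_congr
                intro l hl1 hl2
                rw [hYeq l (by omega)]
          · -- k i₀ = 1 : block-1 site products identical, block-0 differs only at site gg i₀ - 1
            have hYeq : ∀ l, YY gg (fun i => gg i - εc i) n l = YY gg (fun i => gg i - εd i) n l := by
              intro l
              simp only [hYYdef]
              refine congrArg List.prod (List.map_congr_left ?_)
              intro i _
              by_cases hii : i = i₀
              · rw [hii]
                simp only [hL1, if_pos hk0]
              · exact hLag1 i l hii
            have hXeq : ∀ l, l ≠ gg i₀ - 1 →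
                XX gg (fun i => gg i - εc i) n l = XX gg (fun i => gg i - εd i) n l := by
              intro l hl
              simp only [hXXdef]
              refine congrArg List.prod (List.map_congr_left ?_)
              intro i _
              by_cases hii : i = i₀
              · rw [hii]
                simp only [hL0, if_neg (show ¬ k i₀ = 0 by rw [hk0]; decide), hcci, hcdi]
                by_cases h1 : gg i₀ - 1 ≤ l ∧ l ≤ m
                · rw [if_pos h1, if_pos (show gg i₀ ≤ l ∧ l ≤ m by omega)]
                · rw [if_neg h1, if_neg (show ¬ (gg i₀ ≤ l ∧ l ≤ m) by omega)]
              · exact hLag0 i l hii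
            congr 1
            · rw [PyrAux.ordProd_split (f := fun l => if l = 1 then (φt 0)
                  (XX gg (fun i => gg i - εc i) n l) else (ψt 0) (XX gg (fun i => gg i - εc i) n l))
                  hl₀1 hl₀1 hl₀m,
                PyrAux.ordProd_split (f := fun l => if l = 1 then (φt 0)
                  (XX gg (fun i => gg i - εd i) n l) else (ψt 0) (XX gg (fun i => gg i - εd i) n l))
                  hl₀1 hl₀1 hl₀m]
              have hflip : ∀ (φ' : A 0 →ₗ[ℂ] ℂ) (st : B 0 →ₗ[ℂ] ℂ),
                  IsBooleanExt (G 0) (⇑(ι 0)) (t 0) φ' st →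
                  st (XX gg (fun i => gg i - εc i) n (gg i₀ - 1)) =
                    st (XX gg (fun i => gg i - εd i) n (gg i₀ - 1)) := by
                intro φ' st hBE
                simp only [hXXdef]
                refine PyrAux.flip_letter (G 0) (⇑(ι 0)) (t 0)
                  (fun a b => map_mul (ι 0) a b) hBE hi₀n ?_ ?_ ?_ ?_ ?_ ?_
                · intro i hi
                  rcases PyrAux.fin2 (k i) with h | h
                  · simp only [hL0, if_pos h]
                    by_cases hcnd : gg i = gg i₀ - 1
                    · rw [if_pos hcnd]
                      exact Or.inr (Or.inr ⟨w0 i, hword0 i hi h, rfl⟩)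
                    · rw [if_neg hcnd]
                      exact Or.inl (by trivial)
                  · simp only [hL0, if_neg (show ¬ k i = 0 by rw [h]; decide)]
                    by_cases hcnd : gg i - εc i ≤ gg i₀ - 1 ∧ gg i₀ - 1 ≤ m
                    · rw [if_pos hcnd]
                      exact Or.inr (Or.inl (by trivial))
                    · rw [if_neg hcnd]
                      exact Or.inl (by trivial)
                · intro i hi
                  rcases PyrAux.fin2 (k i) with h | h
                  · simp only [hL0, if_pos h]
                    by_cases hcnd : gg i = gg i₀ - 1
                    · rw [if_pos hcnd]
                      exact Or.inr (Or.inr ⟨w0 i, hword0 i hi h, rfl⟩)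
                    · rw [if_neg hcnd]
                      exact Or.inl (by trivial)
                  · simp only [hL0, if_neg (show ¬ k i = 0 by rw [h]; decide)]
                    by_cases hcnd : gg i - εd i ≤ gg i₀ - 1 ∧ gg i₀ - 1 ≤ m
                    · rw [if_pos hcnd]
                      exact Or.inr (Or.inl (by trivial))
                    · rw [if_neg hcnd]
                      exact Or.inl (by trivial)
                · intro i _ hii
                  exact hLag0 i _ hii
                · simp only [hL0, if_neg (show ¬ k i₀ = 0 by rw [hk0]; decide), hcci]
                  rw [if_pos (show gg i₀ - 1 ≤ gg i₀ - 1 ∧ gg i₀ - 1 ≤ m from ⟨le_rfl, hl₀m⟩)]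
                · simp only [hL0, if_neg (show ¬ k i₀ = 0 by rw [hk0]; decide), hcdi]
                  rw [if_neg (show ¬ (gg i₀ ≤ gg i₀ - 1 ∧ gg i₀ - 1 ≤ m) by omega)]
                · rcases hside with hs | hs
                  · left
                    intro j hj
                    rcases PyrAux.fin2 (k j) with h | h
                    · simp only [hL0, if_pos h, if_neg (hs j hj)]
                      exact Or.inl (by trivial)
                    · simp only [hL0, if_neg (show ¬ k j = 0 by rw [h]; decide)]
                      by_cases hcnd : gg j - εc j ≤ gg i₀ - 1 ∧ gg i₀ - 1 ≤ m
                      · rw [if_pos hcnd]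
                        exact Or.inr (by trivial)
                      · rw [if_neg hcnd]
                        exact Or.inl (by trivial)
                  · right
                    intro j hj hjn
                    rcases PyrAux.fin2 (k j) with h | h
                    · simp only [hL0, if_pos h, if_neg (hs j hj hjn)]
                      exact Or.inl (by trivial)
                    · simp only [hL0, if_neg (show ¬ k j = 0 by rw [h]; decide)]
                      by_cases hcnd : gg j - εc j ≤ gg i₀ - 1 ∧ gg i₀ - 1 ≤ m
                      · rw [if_pos hcnd]
                        exact Or.inr (by trivial)
                      · rw [if_neg hcnd]
                        exact Or.inl (by trivial)
              congr 1
              · apply PyrAux.ordProd_congr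
                intro l hl1 hl2
                rw [hXeq l (by omega)]
              congr 1
              · by_cases h1 : gg i₀ - 1 = 1
                · rw [if_pos h1, if_pos h1]
                  exact hflip (φ 0) (φt 0) (hφt 0)
                · rw [if_neg h1, if_neg h1]
                  exact hflip (ψ 0) (ψt 0) (hψt 0)
              · apply PyrAux.ordProd_congr
                intro l hl1 hl2
                rw [hXeq l (by omega)]
            · apply PyrAux.ordProd_congr
              intro l _ _
              rw [hYeq l]
        rcases Nat.lt_or_ge (εa i₀) 1 with ha0 | ha1
        · exact (main εb εa hεb hεa (fun i hii => (hagree i hii).symm) hbb hba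
            (by have h1 := hεa i₀; have h2 := hεb i₀; omega) (by omega)).symm
        · exact main εa εb hεa hεb hagree hba hbb (by have h1 := hεa i₀; omega)
            (by have h1 := hεa i₀; have h2 := hεb i₀; omega)
  -- vanishing of non-pyramidal monomial sums
  have vanish_core : ∀ (gg : ℕ → ℕ), (∀ i, i < n → 1 ≤ gg i ∧ gg i ≤ m) →
      ∀ (i₀ : ℕ), i₀ < n → 2 ≤ gg i₀ →
      ((∀ j, j < i₀ → gg j ≠ gg i₀ - 1) ∨ (∀ j, i₀ < j → j < n → gg j ≠ gg i₀ - 1)) →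
      Φ (((List.range n).map fun i => jc (k i) (gg i) (w i)).prod) = 0 := by
    intro gg hb i₀ hi₀n h2 hside
    have hexp : ∀ i ∈ List.range n, jc (k i) (gg i) (w i) =
        ∑ v ∈ ({0, 1} : Finset ℕ), (-1 : ℤ) ^ v • mono gg i v := by
      intro i hi
      rw [List.mem_range] at hi
      rw [Finset.sum_pair (by norm_num : (0 : ℕ) ≠ 1), hjc_split gg i hi]
      simp [sub_eq_add_neg]
    rw [List.map_congr_left hexp,
      PyrAux.range_map_eq_ofFn (fun i => ∑ v ∈ ({0, 1} : Finset ℕ), (-1 : ℤ) ^ v • mono gg i v) n,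
      PyrAux.ofFn_prod_sum n ({0, 1} : Finset ℕ)
        (fun i v => (-1 : ℤ) ^ v • mono gg i.1 v), map_sum]
    refine Finset.sum_involution
      (fun ε _ => Function.update ε (⟨i₀, hi₀n⟩ : Fin n) (1 - ε ⟨i₀, hi₀n⟩)) ?_ ?_ ?_ ?_
    · -- paired terms cancel
      intro ε hε
      have hmem : ∀ iF : Fin n, ε iF ≤ 1 := by
        intro iF
        have := Fintype.mem_piFinset.1 hε iF
        simp only [Finset.mem_insert, Finset.mem_singleton] at this
        omega
      set i₀F : Fin n := ⟨i₀, hi₀n⟩ with hi₀F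
      set εe : ℕ → ℕ := fun j => if h : j < n then ε ⟨j, h⟩ else 0 with hεe
      set εe' : ℕ → ℕ := fun j => if j = i₀ then 1 - εe i₀ else εe j with hεe'
      have hεei : εe i₀ = ε i₀F := by simp only [hεe, dif_pos hi₀n]; rfl
      have hc1 : (List.ofFn fun i : Fin n => (-1 : ℤ) ^ (ε i) • mono gg i.1 (ε i)) =
          (List.range n).map (fun j => (-1 : ℤ) ^ (εe j) • mono gg j (εe j)) := by
        rw [PyrAux.range_map_eq_ofFn]
        refine congrArg List.ofFn (funext fun iF => ?_)
        have hv : εe iF.1 = ε iF := by simp only [hεe, dif_pos iF.isLt, Fin.eta]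
        rw [hv]
      have hc2 : (List.ofFn fun i : Fin n =>
          (-1 : ℤ) ^ (Function.update ε i₀F (1 - ε i₀F) i) •
            mono gg i.1 (Function.update ε i₀F (1 - ε i₀F) i)) =
          (List.range n).map (fun j => (-1 : ℤ) ^ (εe' j) • mono gg j (εe' j)) := by
        rw [PyrAux.range_map_eq_ofFn]
        refine congrArg List.ofFn (funext fun iF => ?_)
        have hup : Function.update ε i₀F (1 - ε i₀F) iF = εe' iF.1 := by
          rw [Function.update_apply]
          by_cases hii : iF = i₀F
          · rw [if_pos hii]
            have h1 : iF.1 = i₀ := by rw [hii]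
            simp only [hεe', if_pos h1, hεei]
          · rw [if_neg hii]
            have hne : ¬ iF.1 = i₀ := fun hE => hii (Fin.ext hE)
            simp only [hεe', if_neg hne, hεe, dif_pos iF.isLt, Fin.eta]
        rw [hup]
      rw [hc1, hc2, PyrAux.prod_zsmul, PyrAux.prod_zsmul, map_zsmul, map_zsmul]
      have hεeb : ∀ j, εe j ≤ 1 := by
        intro j
        by_cases h : j < n
        · simp only [hεe, dif_pos h]
          exact hmem ⟨j, h⟩
        · simp only [hεe, dif_neg h]
          omega
      have hεe'b : ∀ j, εe' j ≤ 1 := by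
        intro j
        by_cases h : j = i₀
        · simp only [hεe', if_pos h]
          omega
        · simp only [hεe', if_neg h]
          exact hεeb j
      have hΦeq := flipPhi gg hb i₀ hi₀n h2 hside εe εe' hεeb hεe'b
        (fun i hii => (by simp only [hεe', if_neg hii] : εe' i = εe i).symm)
      rw [hΦeq]
      have hsign : (-1 : ℤ) ^ (∑ i ∈ Finset.range n, εe' i) =
          -(-1 : ℤ) ^ (∑ i ∈ Finset.range n, εe i) := by
        have hi₀mem : i₀ ∈ Finset.range n := Finset.mem_range.2 hi₀n
        rw [← Finset.sum_erase_add _ _ hi₀mem, ← Finset.sum_erase_add _ _ hi₀mem]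
        have hC : ∑ i ∈ (Finset.range n).erase i₀, εe' i =
            ∑ i ∈ (Finset.range n).erase i₀, εe i :=
          Finset.sum_congr rfl (fun j hj => by
            simp only [hεe', if_neg (Finset.ne_of_mem_erase hj)])
        rw [hC]
        have h01 : εe i₀ ≤ 1 := hεeb i₀
        have hε' : εe' i₀ = 1 - εe i₀ := by simp only [hεe', if_pos rfl]
        rcases Nat.le_one_iff_eq_zero_or_eq_one.1 h01 with h | h
        · rw [hε', h]
          rw [pow_add, pow_add]
          ring
        · rw [hε', h]
          rw [pow_add, pow_add]
          ring
      rw [hsign, neg_smul]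
      exact add_neg_cancel _
    · -- the involution has no fixed points
      intro ε hε hne hEq
      have := congrFun hEq (⟨i₀, hi₀n⟩ : Fin n)
      simp only [Function.update_self] at this
      omega
    · -- the involution stays in the index set
      intro ε hε
      rw [Fintype.mem_piFinset] at hε ⊢
      intro iF
      simp only [Function.update_apply]
      by_cases h : iF = ⟨i₀, hi₀n⟩
      · rw [if_pos h]
        have := hε (⟨i₀, hi₀n⟩ : Fin n)
        simp only [Finset.mem_insert, Finset.mem_singleton] at this ⊢
        omega
      · rw [if_neg h]
        exact hε iF
    · -- the involution is involutive
      intro ε hε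
      have h01 : ε (⟨i₀, hi₀n⟩ : Fin n) ≤ 1 := by
        have := Fintype.mem_piFinset.1 hε (⟨i₀, hi₀n⟩ : Fin n)
        simp only [Finset.mem_insert, Finset.mem_singleton] at this
        omega
      simp only [Function.update_self, Function.update_idem]
      rw [show 1 - (1 - ε (⟨i₀, hi₀n⟩ : Fin n)) = ε ⟨i₀, hi₀n⟩ by omega,
        Function.update_eq_self]
  have vanishN : ∀ (gg : ℕ → ℕ), (∀ i, i < n → 1 ≤ gg i ∧ gg i ≤ m) →
      (∃ i, i < n ∧ min (i + 1) (n - i) < gg i) →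
      Φ (((List.range n).map fun i => jc (k i) (gg i) (w i)).prod) = 0 := by
    intro gg hb hviol
    by_cases hfwd : ∃ i, i < n ∧ i + 1 < gg i
    · obtain ⟨hi₀n, hi₀g⟩ : Nat.find hfwd < n ∧ Nat.find hfwd + 1 < gg (Nat.find hfwd) :=
        Nat.find_spec hfwd
      apply vanish_core gg hb (Nat.find hfwd) hi₀n (by omega)
      left
      intro j hj
      have hnj : ¬ (j < n ∧ j + 1 < gg j) := Nat.find_min hfwd hj
      have hjn : j < n := by omega
      have hgj : gg j ≤ j + 1 := by
        by_contra hcon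
        exact hnj ⟨hjn, by omega⟩
      omega
    · push_neg at hfwd
      obtain ⟨i, hin, hiv⟩ := hviol
      have hni : n - i < gg i := by
        rcases Nat.le_total (i + 1) (n - i) with h | h
        · rw [min_eq_left h] at hiv
          exact absurd hiv (by have := hfwd i hin; omega)
        · rw [min_eq_right h] at hiv
          exact hiv
      have hPi₀ : (Nat.findGreatest (fun j => j < n ∧ n - j < gg j) n) < n ∧
          n - (Nat.findGreatest (fun j => j < n ∧ n - j < gg j) n) <
            gg (Nat.findGreatest (fun j => j < n ∧ n - j < gg j) n) :=
        Nat.findGreatest_spec (P := fun j => j < n ∧ n - j < gg j) (le_of_lt hin) ⟨hin, hni⟩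
      obtain ⟨hi₀n, hi₀g⟩ := hPi₀
      apply vanish_core gg hb _ hi₀n (by omega)
      right
      intro j hj hjn
      have hnj : ¬ (j < n ∧ n - j < gg j) :=
        Nat.findGreatest_is_greatest hj (le_of_lt hjn)
      have hgj : gg j ≤ n - j := by
        by_contra hcon
        exact hnj ⟨hjn, by omega⟩
      omega
  -- main computation: expand, discard non-pyramidal terms, and reindex
  rw [show ((List.range n).map fun i => ∑ r ∈ Finset.Icc 1 m, jc (k i) r (w i)) =
      List.ofFn (fun i : Fin n => ∑ r ∈ Finset.Icc 1 m, jc (k i.1) r (w i.1)) from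
    PyrAux.range_map_eq_ofFn _ n,
    PyrAux.ofFn_prod_sum n (Finset.Icc 1 m) (fun i r => jc (k i.1) r (w i.1)), map_sum]
  have hsub : Fintype.piFinset (fun i : Fin n => Finset.Icc 1 (min (i.1 + 1) (n - i.1))) ⊆
      Fintype.piFinset (fun _ : Fin n => Finset.Icc 1 m) := by
    intro g hg
    rw [Fintype.mem_piFinset] at hg ⊢
    intro i
    have h1 := hg i
    rw [Finset.mem_Icc] at h1 ⊢
    have h3 := i.isLt
    omega
  have hvan : ∀ g ∈ Fintype.piFinset (fun _ : Fin n => Finset.Icc 1 m),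
      g ∉ Fintype.piFinset (fun i : Fin n => Finset.Icc 1 (min (i.1 + 1) (n - i.1))) →
      Φ ((List.ofFn fun i : Fin n => jc (k i.1) (g i) (w i.1)).prod) = 0 := by
    intro g hgI hgP
    set gh : ℕ → ℕ := fun j => if h : j < n then g ⟨j, h⟩ else 1 with hgh
    have hconv : (List.ofFn fun i : Fin n => jc (k i.1) (g i) (w i.1)) =
        (List.range n).map (fun j => jc (k j) (gh j) (w j)) := by
      rw [PyrAux.range_map_eq_ofFn (fun j => jc (k j) (gh j) (w j)) n]
      refine congrArg List.ofFn (funext fun iF => ?_)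
      have hv : gh iF.1 = g iF := by simp only [hgh, dif_pos iF.isLt, Fin.eta]
      rw [hv]
    rw [hconv]
    apply vanishN gh
    · intro i hi
      have hmem := Fintype.mem_piFinset.1 hgI ⟨i, hi⟩
      rw [Finset.mem_Icc] at hmem
      simp only [hgh, dif_pos hi]
      exact hmem
    · rw [Fintype.mem_piFinset] at hgP
      push_neg at hgP
      obtain ⟨iF, hiF⟩ := hgP
      refine ⟨iF.1, iF.isLt, ?_⟩
      have h1 := Fintype.mem_piFinset.1 hgI iF
      rw [Finset.mem_Icc] at h1
      rw [Finset.mem_Icc] at hiF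
      have h2 : gh iF.1 = g iF := by simp only [hgh, dif_pos iF.isLt, Fin.eta]
      rw [h2]
      omega
  rw [← Finset.sum_subset hsub hvan]
  have hminlt : ∀ (x : ℕ) (iF : Fin n),
      min x (min (iF.1 + 1) (n - iF.1) - 1) < min (iF.1 + 1) (n - iF.1) := by
    intro x iF
    have := iF.isLt
    omega
  refine Finset.sum_nbij'
    (fun g iF => (⟨min (g iF - 1) (min (iF.1 + 1) (n - iF.1) - 1),
      hminlt (g iF - 1) iF⟩ : Fin (min (iF.1 + 1) (n - iF.1))))
    (fun r iF => (r iF : ℕ) + 1) ?_ ?_ ?_ ?_ ?_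
  · intro g _
    exact Finset.mem_univ _
  · intro r _
    rw [Fintype.mem_piFinset]
    intro iF
    show ((r iF : ℕ) + 1) ∈ Finset.Icc 1 (min (iF.1 + 1) (n - iF.1))
    rw [Finset.mem_Icc]
    have := (r iF).isLt
    omega
  · intro g hg
    funext iF
    show min (g iF - 1) (min (iF.1 + 1) (n - iF.1) - 1) + 1 = g iF
    have h1 := Fintype.mem_piFinset.1 hg iF
    rw [Finset.mem_Icc] at h1
    have h3 := iF.isLt
    omega
  · intro r _
    funext iF
    apply Fin.ext
    show min ((r iF : ℕ) + 1 - 1) (min (iF.1 + 1) (n - iF.1) - 1) = (r iF : ℕ)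
    have := (r iF).isLt
    omega
  · intro g hg
    refine congrArg Φ (congrArg List.prod (congrArg List.ofFn (funext fun iF => ?_)))
    have h1 := Fintype.mem_piFinset.1 hg iF
    rw [Finset.mem_Icc] at h1
    have h3 := iF.isLt
    have h2 : (min (g iF - 1) (min (iF.1 + 1) (n - iF.1) - 1)) + 1 = g iF := by omega
    exact congrArg (fun v => jc (k iF.1) v (w iF.1)) h2.symm
end

section
/- For every N ≥ 2 one has ĵ_N^{(m)} ∘ δ_N = Δ_{N−1}^{(m)} ∘ î₁ as maps 𝒜 → (𝒜̃^{*(m)})^{⊗N}, where δ_N is the N-th iteration of δ and Δ_{N−1}^{(m)} is the (N−1)-th iteration of the coproduct Δ^{(m)} defined recursively by Δ₁^{(m)} = Δ^{(m)} and Δ_k^{(m)} = (id ⊗ Δ_{k−1}^{(m)}) ∘ Δ^{(m)}. (Corollary 5.3) -/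
open scoped ComplexOrder TensorProduct

/-- The pure tensor `f 0 ⊗ f 1 ⊗ ⋯ ⊗ f n` in the iterated (right-nested) tensor power
`TP n = C ⊗ (C ⊗ (⋯ ⊗ C))` (with `n + 1` factors), presented through the structure
isomorphisms `e0 : TP 0 ≃ C` and `eS n : TP (n+1) ≃ C ⊗ TP n`. -/
noncomputable def pureTensor {C : Type*} [Ring C] [Algebra ℂ C] {TP : ℕ → Type*}
    [∀ n, Ring (TP n)] [∀ n, Algebra ℂ (TP n)]
    (e0 : TP 0 ≃ₐ[ℂ] C) (eS : ∀ n, TP (n + 1) ≃ₐ[ℂ] C ⊗[ℂ] TP n) :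
    ∀ n, (ℕ → C) → TP n
  | 0, f => e0.symm (f 0)
  | n + 1, f => (eS n).symm (f 0 ⊗ₜ[ℂ] pureTensor e0 eS n (fun i => f (i + 1)))


lemma aux_prod {C : Type*} [Ring C] [Algebra ℂ C] (Δ : C →ₐ[ℂ] C ⊗[ℂ] C)
    (l : List C) (h : ∀ x ∈ l, Δ x = x ⊗ₜ[ℂ] x) :
    Δ l.prod = l.prod ⊗ₜ[ℂ] l.prod := by
  induction l with
  | nil => simp [Algebra.TensorProduct.one_def]
  | cons a tl ih =>
    simp only [List.prod_cons, map_mul, ih (fun x hx => h x (List.mem_cons_of_mem _ hx)),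
      h a (List.mem_cons_self), Algebra.TensorProduct.tmul_mul_tmul]

lemma aux_DT {C : Type*} [Ring C] [Algebra ℂ C] {TP : ℕ → Type*}
    [∀ n, Ring (TP n)] [∀ n, Algebra ℂ (TP n)]
    (e0 : TP 0 ≃ₐ[ℂ] C) (eS : ∀ n, TP (n + 1) ≃ₐ[ℂ] C ⊗[ℂ] TP n)
    (Δ : C →ₐ[ℂ] C ⊗[ℂ] C) (D : ∀ n, C →ₐ[ℂ] TP n)
    (hD0 : ∀ x : C, e0 (D 0 x) = x)
    (hDsucc : ∀ (n : ℕ) (x : C), eS n (D (n + 1) x) =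
      (Algebra.TensorProduct.map (AlgHom.id ℂ C) (D n)) (Δ x))
    (T : C) (hT : Δ T = T ⊗ₜ[ℂ] T) :
    ∀ n, D n T = pureTensor e0 eS n (fun _ => T) := by
  intro n
  induction n with
  | zero =>
    apply e0.injective
    rw [hD0]
    simp [pureTensor]
  | succ n ih =>
    apply (eS n).injective
    rw [hDsucc, hT]
    simp [pureTensor, ih]

lemma aux_Ddiff {C : Type*} [Ring C] [Algebra ℂ C] {TP : ℕ → Type*}
    [∀ n, Ring (TP n)] [∀ n, Algebra ℂ (TP n)]
    (e0 : TP 0 ≃ₐ[ℂ] C) (eS : ∀ n, TP (n + 1) ≃ₐ[ℂ] C ⊗[ℂ] TP n)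
    (Δ : C →ₐ[ℂ] C ⊗[ℂ] C) (D : ∀ n, C →ₐ[ℂ] TP n)
    (hD0 : ∀ x : C, e0 (D 0 x) = x)
    (hDsucc : ∀ (n : ℕ) (x : C), eS n (D (n + 1) x) =
      (Algebra.TensorProduct.map (AlgHom.id ℂ C) (D n)) (Δ x))
    (T d : C) (hT : Δ T = T ⊗ₜ[ℂ] T)
    (hd : Δ d = d ⊗ₜ[ℂ] T + T ⊗ₜ[ℂ] d) :
    ∀ n, D n d = ∑ i ∈ Finset.range (n + 1),
      pureTensor e0 eS n (fun l => if l = i then d else T) := by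
  intro n
  induction n with
  | zero =>
    apply e0.injective
    rw [hD0]
    simp [pureTensor]
  | succ n ih =>
    apply (eS n).injective
    rw [hDsucc, hd]
    rw [map_sum, map_add, Algebra.TensorProduct.map_tmul, Algebra.TensorProduct.map_tmul]
    simp only [AlgHom.coe_id, id_eq]
    rw [ih, aux_DT e0 eS Δ D hD0 hDsucc T hT n]
    have hpure : ∀ f : ℕ → C, eS n (pureTensor e0 eS (n+1) f) =
        f 0 ⊗ₜ[ℂ] pureTensor e0 eS n (fun i => f (i + 1)) := by
      intro f; simp [pureTensor]
    simp only [hpure]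
    conv_rhs => rw [Finset.sum_range_succ']
    rw [TensorProduct.tmul_sum, add_comm]
    congr 1
    · apply Finset.sum_congr rfl
      intro i _
      have hi : (fun l : ℕ => if l + 1 = i + 1 then d else T) =
          (fun l => if l = i then d else T) := by
        funext l; simp
      simp [hi]

/- `A` is the unital free *-algebra `𝒜` with generating set `G`; `B = 𝒜̃ = 𝒜 * ℂ[t]`
with canonical embedding `ι` and hermitian separator `tB`; `C = 𝒜̃^{*(m)}` is the
`m`-fold free product of `𝒜̃` (units identified), with the canonical embeddings
`emb k : 𝒜̃ → C` of the copies `k = 1, …, m`; thus `a_{(k)} = emb k (ι a)`,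
`t_{(k)} = emb k tB` and `t_{[k,m]} = t_{(k)} ⋯ t_{(m)}`. -/
theorem iterated_coproduct_formula
    {A B C : Type*}
    [Ring A] [Algebra ℂ A] [StarRing A] [StarModule ℂ A]
    [Ring B] [Algebra ℂ B] [StarRing B] [StarModule ℂ B]
    [Ring C] [Algebra ℂ C] [StarRing C] [StarModule ℂ C]
    (G : Set A) (hG : ∀ x ∈ G, star x ∈ G) (hA : Algebra.adjoin ℂ G = ⊤)
    (ι : A →⋆ₐ[ℂ] B) (tB : B) (htB : star tB = tB)
    (hB : Algebra.adjoin ℂ (Set.range ι ∪ {tB}) = ⊤)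
    (m : ℕ) (hm : 1 ≤ m)
    (emb : ℕ → B →⋆ₐ[ℂ] C)
    (hC : Algebra.adjoin ℂ {x : C | ∃ k, 1 ≤ k ∧ k ≤ m ∧ ∃ b : B, x = emb k b} = ⊤)
    -- the coproduct `Δ^{(m)}`, with
    -- `Δ^{(m)}(t_{(k)}) = t_{(k)} ⊗ t_{(k)}`,
    -- `Δ^{(m)}(a_{(k)} - a_{(k+1)}) = (a_{(k)} - a_{(k+1)}) ⊗ t_{[k,m]}
    --                                   + t_{[k,m]} ⊗ (a_{(k)} - a_{(k+1)})`,
    (Δ : C →ₐ[ℂ] C ⊗[ℂ] C)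
    (hΔt : ∀ k, 1 ≤ k → k ≤ m → Δ (emb k tB) = emb k tB ⊗ₜ[ℂ] emb k tB)
    (hΔa : ∀ a ∈ G, ∀ k, 1 ≤ k → k ≤ m →
      Δ (embSite (fun l x => emb l (ι x)) m k a - embSite (fun l x => emb l (ι x)) m (k + 1) a) =
        (embSite (fun l x => emb l (ι x)) m k a - embSite (fun l x => emb l (ι x)) m (k + 1) a)
            ⊗ₜ[ℂ] ordProd (fun l => emb l tB) k m +
          ordProd (fun l => emb l tB) k m ⊗ₜ[ℂ]
            (embSite (fun l x => emb l (ι x)) m k a - embSite (fun l x => emb l (ι x)) m (k + 1) a))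
    -- the iterated tensor powers `TP n` (with `n+1` factors) of `C = 𝒜̃^{*(m)}`, and the
    -- iterated coproducts `D n = Δ_n^{(m)}`, with `Δ_0 = id`,
    -- `Δ_k^{(m)} = (id ⊗ Δ_{k-1}^{(m)}) ∘ Δ^{(m)}`
    {TP : ℕ → Type*} [∀ n, Ring (TP n)] [∀ n, Algebra ℂ (TP n)]
    (e0 : TP 0 ≃ₐ[ℂ] C) (eS : ∀ n, TP (n + 1) ≃ₐ[ℂ] C ⊗[ℂ] TP n)
    (D : ∀ n, C →ₐ[ℂ] TP n)
    (hD0 : ∀ x : C, e0 (D 0 x) = x)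
    (hDsucc : ∀ (n : ℕ) (x : C), eS n (D (n + 1) x) =
      (Algebra.TensorProduct.map (AlgHom.id ℂ C) (D n)) (Δ x))
    -- the `N`-fold free product `FN = 𝒜 * ⋯ * 𝒜` with embeddings `κN i` (`i = 0, …, N-1`),
    -- the map `δ_N(a) = a^{(1)} + ⋯ + a^{(N)}`, and the *-homomorphism
    -- `ĵ_N^{(m)} : FN → (𝒜̃^{*(m)})^{⊗N}` given on the generators of the `i`-th factor by
    -- `ĵ_{i,N}^{(m)}(a) = Σ_{k=1}^m t_{[k,m]}^{⊗(i-1)} ⊗ (a_{(k)} - a_{(k+1)}) ⊗ t_{[k,m]}^{⊗(N-i)}`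
    (N : ℕ) (hN : 2 ≤ N)
    {FN : Type*} [Ring FN] [Algebra ℂ FN] [StarRing FN] [StarModule ℂ FN]
    (κN : ℕ → (A →⋆ₐ[ℂ] FN))
    (hFN : Algebra.adjoin ℂ {x : FN | ∃ i < N, ∃ a : A, x = κN i a} = ⊤)
    (δN : A →⋆ₐ[ℂ] FN) (hδN : ∀ a ∈ G, δN a = ∑ i ∈ Finset.range N, κN i a)
    (jN : FN →ₐ[ℂ] TP (N - 1))
    (hjN : ∀ i < N, ∀ a ∈ G, jN (κN i a) = ∑ k ∈ Finset.Icc 1 m,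
      pureTensor e0 eS (N - 1) (fun l => if l = i
        then embSite (fun l' x => emb l' (ι x)) m k a - embSite (fun l' x => emb l' (ι x)) m (k + 1) a
        else ordProd (fun l' => emb l' tB) k m)) :
    -- `ĵ_N^{(m)} ∘ δ_N = Δ_{N-1}^{(m)} ∘ î₁`
    ∀ x : A, jN (δN x) = D (N - 1) (emb 1 (ι x)) := by
  classical
  have hNT : ∀ k, 1 ≤ k → k ≤ m → Δ (ordProd (fun l => emb l tB) k m) =
      ordProd (fun l => emb l tB) k m ⊗ₜ[ℂ] ordProd (fun l => emb l tB) k m := by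
    intro k hk1 hk2
    apply aux_prod
    intro x hx
    obtain ⟨l, hl, rfl⟩ := List.mem_map.mp hx
    have hl' := List.mem_range'_1.mp hl
    exact hΔt l (by omega) (by omega)
  have key : ∀ a ∈ G, jN (δN a) = D (N - 1) (emb 1 (ι a)) := by
    intro a ha
    have htel : ∑ k ∈ Finset.Icc 1 m, (embSite (fun l x => emb l (ι x)) m k a
        - embSite (fun l x => emb l (ι x)) m (k + 1) a) = emb 1 (ι a) := by
      rw [← Finset.Ico_add_one_right_eq_Icc, Finset.sum_Ico_eq_sum_range]
      simp only [Nat.succ_sub_one, Nat.add_sub_cancel, add_assoc]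
      rw [Finset.sum_range_sub' (f := fun i => embSite (fun l x => emb l (ι x)) m (1 + i) a) m]
      have h1 : embSite (fun l x => emb l (ι x)) m (1 + 0) a = emb 1 (ι a) := by
        simp [embSite, hm]
      have h2 : embSite (fun l x => emb l (ι x)) m (1 + m) a = 0 := by
        simp [embSite]
      rw [h1, h2, sub_zero]
    rw [hδN a ha, map_sum]
    rw [Finset.sum_congr rfl (fun i hi => hjN i (Finset.mem_range.mp hi) a ha)]
    conv_rhs => rw [← htel]
    rw [map_sum, Finset.sum_comm]
    apply Finset.sum_congr rfl
    intro k hk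
    obtain ⟨hk1, hk2⟩ := Finset.mem_Icc.mp hk
    rw [aux_Ddiff e0 eS Δ D hD0 hDsucc _ _ (hNT k hk1 hk2) (hΔa a ha k hk1 hk2) (N - 1)]
    rw [Nat.sub_add_cancel (by omega : 1 ≤ N)]
  set F : A →ₐ[ℂ] TP (N - 1) := jN.comp δN.toAlgHom with hF
  set Gm : A →ₐ[ℂ] TP (N - 1) :=
    (D (N - 1)).comp (((emb 1).toAlgHom).comp ι.toAlgHom) with hGm
  have hle : Algebra.adjoin ℂ G ≤ AlgHom.equalizer F Gm :=
    Algebra.adjoin_le (fun a ha => key a ha)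
  intro x
  have hx : x ∈ AlgHom.equalizer F Gm := hle (by rw [hA]; trivial)
  exact hx
end
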